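/- arXiv:2304.08944 — 8 statements merged into one kernel-verified Lean document; each statement's English description precedes it below -/
import Mathlib

section
/- There is an absolute constant C > 0 such that the following holds. Let F be a class of functions from a set X to [0,1], f* ∈ F, and z₁,…,z_N ∈ X fixed points; write Z_N = (z₁,…,z_N). Let l₁,…,l_N be independent {0,1}-valued random variables with E[l_k] = f*(z_k) for each k, and let f̃ ∈ argmin_{f∈F} Σ_{k=1}^N (f(z_k) − l_k)². Then for any δ ∈ (0,1), with probability at least 1 − δ, ‖f̃ − f*‖_{Z_N} ≤ C·√(log(2/δ) + log N(F, 1/N)). -/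
open MeasureTheory ProbabilityTheory

/-- The covering number `N(F, ε)`: the minimal cardinality of a subset `C ⊆ F` such that
every `f ∈ F` has `f' ∈ C` with `‖f − f'‖_∞ ≤ ε`. -/
noncomputable def coveringNumber {X : Type*} (F : Set (X → ℝ)) (ε : ℝ) : ℕ∞ :=
  sInf {n : ℕ∞ | ∃ C : Finset (X → ℝ), ↑C ⊆ F ∧
    (∀ f ∈ F, ∃ f' ∈ C, ∀ x, |f x - f' x| ≤ ε) ∧ (C.card : ℕ∞) = n}

open Real

lemma integrable_of_bdd {Ω : Type*} [MeasurableSpace Ω] {μ : Measure Ω} [IsProbabilityMeasure μ]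
    {Y : Ω → ℝ} (hm : Measurable Y) {b : ℝ} (hb : ∀ ω, |Y ω| ≤ b) : Integrable Y μ :=
  Integrable.mono' (integrable_const b) hm.aestronglyMeasurable (Filter.Eventually.of_forall hb)

lemma mgf_le_bounded {Ω : Type*} [MeasurableSpace Ω] (μ : Measure Ω) [IsProbabilityMeasure μ]
    (Y : Ω → ℝ) (hm : Measurable Y) (a t : ℝ) (ha : 0 ≤ a) (hbd : ∀ ω, |Y ω| ≤ a)
    (h0 : ∫ ω, Y ω ∂μ = 0) : mgf Y μ t ≤ exp (t^2 * a^2 / 2) := by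
  rcases eq_or_lt_of_le ha with rfl | hapos
  · have hY : ∀ ω, Y ω = 0 := fun ω => abs_nonpos_iff.mp (hbd ω) |>.symm ▸ rfl
    have : mgf Y μ t = 1 := by
      unfold mgf
      have : (fun ω => exp (t * Y ω)) = fun _ => (1:ℝ) := by
        funext ω; rw [hY ω]; simp
      rw [this]; simp
    rw [this]
    exact one_le_exp (by positivity)
  · set u := t * a with hu
    -- pointwise bound
    have hpt : ∀ ω, exp (t * Y ω) ≤ cosh u + (Y ω / a) * sinh u := by
      intro ω
      have hx1 : -a ≤ Y ω := (abs_le.mp (hbd ω)).1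
      have hx2 : Y ω ≤ a := (abs_le.mp (hbd ω)).2
      have hcvx := convexOn_exp.2 (Set.mem_univ (-u)) (Set.mem_univ u)
        (show (0:ℝ) ≤ (a - Y ω) / (2*a) by apply div_nonneg <;> linarith)
        (show (0:ℝ) ≤ (a + Y ω) / (2*a) by apply div_nonneg <;> linarith)
        (show (a - Y ω) / (2*a) + (a + Y ω) / (2*a) = 1 by field_simp; ring)
      simp only [smul_eq_mul] at hcvx
      have heq : (a - Y ω) / (2*a) * (-u) + (a + Y ω) / (2*a) * u = t * Y ω := by
        field_simp; ring
      rw [heq] at hcvx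
      refine hcvx.trans (le_of_eq ?_)
      rw [Real.cosh_eq, Real.sinh_eq]
      field_simp
      ring
    have hint : Integrable (fun ω => exp (t * Y ω)) μ := by
      refine integrable_of_bdd (by fun_prop) (b := exp (|t| * a)) (fun ω => ?_)
      rw [abs_of_pos (exp_pos _)]
      exact exp_le_exp.mpr (le_trans (le_abs_self _) (by
        rw [abs_mul]; exact mul_le_mul_of_nonneg_left (hbd ω) (abs_nonneg t)))
    have hintY : Integrable Y μ := integrable_of_bdd hm hbd
    have hle : mgf Y μ t ≤ ∫ ω, (cosh u + (Y ω / a) * sinh u) ∂μ := by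
      refine integral_mono hint ?_ hpt
      exact (integrable_const (cosh u)).add ((hintY.div_const a).mul_const (sinh u))
    have : ∫ ω, (cosh u + (Y ω / a) * sinh u) ∂μ = cosh u := by
      rw [integral_add (integrable_const _) ((hintY.div_const a).mul_const (sinh u))]
      simp only [integral_const, probReal_univ, measure_univ, ENNReal.toReal_one, one_smul]
      have hrw : (fun ω => Y ω / a * sinh u) = fun ω => Y ω * (sinh u / a) := by
        funext ω; ring
      rw [hrw, integral_mul_const, h0, zero_mul, add_zero]
    rw [this] at hle
    refine hle.trans ((Real.cosh_le_exp_half_sq u).trans (le_of_eq ?_))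
    rw [hu]; ring_nf

lemma hoeffding_bound {Ω : Type*} [MeasurableSpace Ω] (μ : Measure Ω) [IsProbabilityMeasure μ]
    {N : ℕ} (X : Fin N → Ω → ℝ) (hmeas : ∀ k, Measurable (X k))
    (hindep : iIndepFun X μ)
    (a : Fin N → ℝ) (ha : ∀ k, 0 ≤ a k) (hbd : ∀ k ω, |X k ω| ≤ a k)
    (hmean : ∀ k, ∫ ω, X k ω ∂μ = 0) (v s : ℝ) (hv : v = ∑ k, (a k)^2)
    (hvpos : 0 < v) (hs : 0 ≤ s) :
    (μ {ω | s ≤ ∑ k, X k ω}).toReal ≤ exp (-(s^2) / (2*v)) := by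
  set t := s / v with ht
  have htpos : 0 ≤ t := div_nonneg hs hvpos.le
  have hint : ∀ k, Integrable (fun ω => exp (t * X k ω)) μ := by
    intro k
    refine integrable_of_bdd (by fun_prop) (b := exp (|t| * a k)) (fun ω => ?_)
    rw [abs_of_pos (exp_pos _)]
    exact exp_le_exp.mpr (le_trans (le_abs_self _) (by
      rw [abs_mul]; exact mul_le_mul_of_nonneg_left (hbd k ω) (abs_nonneg t)))
  have hintsum : Integrable (fun ω => exp (t * (∑ k, X k) ω)) μ :=
    hindep.integrable_exp_mul_sum hmeas (fun k _ => hint k)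
  have hset : {ω | s ≤ ∑ k, X k ω} = {ω | s ≤ (∑ k, X k) ω} := by
    ext ω; simp [Finset.sum_apply]
  rw [hset]
  refine (measure_ge_le_exp_mul_mgf s htpos hintsum).trans ?_
  have hmgf : mgf (∑ k, X k) μ t ≤ exp (t^2 * v / 2) := by
    rw [hindep.mgf_sum hmeas]
    calc ∏ k, mgf (X k) μ t ≤ ∏ k, exp (t^2 * (a k)^2 / 2) := by
          refine Finset.prod_le_prod (fun k _ => mgf_nonneg) (fun k _ =>
            mgf_le_bounded μ (X k) (hmeas k) (a k) t (ha k) (hbd k) (hmean k))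
      _ = exp (t^2 * v / 2) := by
          rw [← Real.exp_sum, hv, Finset.mul_sum, ← Finset.sum_div]
  calc exp (-t * s) * mgf (∑ k, X k) μ t ≤ exp (-t * s) * exp (t^2 * v / 2) := by
        exact mul_le_mul_of_nonneg_left hmgf (exp_pos _).le
    _ = exp (-(s^2) / (2*v)) := by
        rw [← Real.exp_add]
        congr 1
        rw [ht]
        field_simp
        ring

lemma exists_min_cover {X : Type*} (F : Set (X → ℝ)) (ε : ℝ) (M : ℕ)
    (h : coveringNumber F ε = (M : ℕ∞)) :
    ∃ G : Finset (X → ℝ), ↑G ⊆ F ∧ (∀ f ∈ F, ∃ g ∈ G, ∀ x, |f x - g x| ≤ ε) ∧ G.card = M := by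
  classical
  set S : Set ℕ∞ := {n : ℕ∞ | ∃ C : Finset (X → ℝ), ↑C ⊆ F ∧
    (∀ f ∈ F, ∃ f' ∈ C, ∀ x, |f x - f' x| ≤ ε) ∧ (C.card : ℕ∞) = n} with hS
  have hSne : S.Nonempty := by
    by_contra hne
    rw [Set.not_nonempty_iff_eq_empty] at hne
    have : coveringNumber F ε = ⊤ := by
      rw [coveringNumber, ← hS, hne]; exact sInf_empty
    rw [h] at this
    exact (ENat.coe_ne_top M) this
  set T : Set ℕ := {n : ℕ | (n : ℕ∞) ∈ S} with hT
  have hTne : T.Nonempty := by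
    obtain ⟨n, C, h1, h2, h3⟩ := hSne
    exact ⟨C.card, by simp only [hT, Set.mem_setOf_eq]; exact ⟨C, h1, h2, rfl⟩⟩
  have hmem' : sInf T ∈ T := Nat.sInf_mem hTne
  have hmem : ((sInf T : ℕ) : ℕ∞) ∈ S := hmem'
  have hcs : coveringNumber F ε = ((sInf T : ℕ) : ℕ∞) := by
    rw [coveringNumber, ← hS]
    refine le_antisymm (sInf_le hmem) (le_sInf ?_)
    rintro b ⟨C, h1, h2, h3⟩
    rw [← h3]
    have hCT : C.card ∈ T := ⟨C, h1, h2, rfl⟩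
    exact_mod_cast Nat.cast_le.mpr (Nat.sInf_le hCT)
  rw [h] at hcs
  have hMI : M = sInf T := by exact_mod_cast hcs
  obtain ⟨C, h1, h2, h3⟩ := hmem
  refine ⟨C, h1, h2, ?_⟩
  rw [hMI]
  exact_mod_cast h3

lemma alg_r {r a : ℝ} (hr : 0 ≤ r) (ha : 1 ≤ a) (h : r^2 ≤ 2*((r+1)*a) + 2) : r ≤ 4*a := by
  nlinarith [sq_nonneg (r - 4*a), sq_nonneg (a-1), mul_nonneg hr (by linarith : (0:ℝ) ≤ a)]

lemma alg_s {b c : ℝ} (hb : 0 ≤ b) (hc : 0 ≤ c) (h : b^2 ≤ c^2) : b ≤ c := by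
  nlinarith


/-- there is an absolute constant `C > 0` such that the least-squares fit `f̃`
to independent `{0,1}`-labels with means `f*(z_k)` satisfies, with probability at least
`1 − δ`, `‖f̃ − f*‖_{Z_N} ≤ C·√(log(2/δ) + log N(F, 1/N))`. -/
theorem stmt1 :
    ∃ C : ℝ, 0 < C ∧
      ∀ (X : Type*) (F : Set (X → ℝ)),
        (∀ f ∈ F, ∀ x, f x ∈ Set.Icc (0 : ℝ) 1) →
      ∀ fstar ∈ F, ∀ (N : ℕ) (z : Fin N → X) (M : ℕ),
        coveringNumber F (1 / N) = (M : ℕ∞) →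
      ∀ (Ω : Type*) (_ : MeasurableSpace Ω) (μ : Measure Ω), IsProbabilityMeasure μ →
      ∀ l : Fin N → Ω → ℝ,
        (∀ k ω, l k ω = 0 ∨ l k ω = 1) →
        (∀ k, Measurable (l k)) →
        iIndepFun l μ →
        (∀ k, ∫ ω, l k ω ∂μ = fstar (z k)) →
      ∀ ftil : Ω → X → ℝ,
        (∀ ω, ftil ω ∈ F ∧ ∀ f ∈ F,
          (∑ k, (ftil ω (z k) - l k ω) ^ 2) ≤ ∑ k, (f (z k) - l k ω) ^ 2) →
      ∀ δ : ℝ, δ ∈ Set.Ioo (0 : ℝ) 1 →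
        ENNReal.ofReal (1 - δ) ≤
          μ {ω | Real.sqrt (∑ k, (ftil ω (z k) - fstar (z k)) ^ 2)
            ≤ C * Real.sqrt (Real.log (2 / δ) + Real.log M)} := by
  classical
  refine ⟨6, by norm_num, ?_⟩
  intro X F hF fstar hfstar N z M hM Ω mΩ μ hμ l hl01 hlmeas hlindep hlmean ftil hftil δ hδ
  haveI := hμ
  obtain ⟨hδ0, hδ1⟩ := hδ
  obtain ⟨G, hGF, hGcov, hGcard⟩ := exists_min_cover F (1/N) M hM
  have hGne : G.Nonempty := by
    obtain ⟨g, hg, -⟩ := hGcov fstar hfstar; exact ⟨g, hg⟩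
  have hM1 : 1 ≤ M := hGcard ▸ Finset.card_pos.mpr hGne
  have hMpos : (0:ℝ) < M := by exact_mod_cast hM1
  set p : Fin N → ℝ := fun k => fstar (z k) with hp
  have hp01 : ∀ k, 0 ≤ p k ∧ p k ≤ 1 := fun k => (hF fstar hfstar (z k))
  have hlp : ∀ k ω, |l k ω - p k| ≤ 1 := by
    intro k ω
    rcases hl01 k ω with h | h <;> rw [h] <;> rw [abs_le] <;>
      constructor <;> linarith [(hp01 k).1, (hp01 k).2]
  set L : ℝ := Real.log (2 * M / δ) with hL
  have h2Mδ : (2:ℝ) ≤ 2 * M / δ := by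
    rw [le_div_iff₀ hδ0]
    have hM1R : (1:ℝ) ≤ M := by exact_mod_cast hM1
    nlinarith
  have hLsum : L = Real.log (2/δ) + Real.log M := by
    rw [hL]
    rw [show (2:ℝ) * M / δ = (2/δ) * M by ring]
    rw [Real.log_mul (by positivity) (by positivity)]
  have hLhalf : (1:ℝ)/2 ≤ L := by
    have := Real.log_le_log (by norm_num) h2Mδ
    have h2 : (0.6931471803 : ℝ) < Real.log 2 := Real.log_two_gt_d9
    linarith
  set Y : (X → ℝ) → Ω → ℝ := fun g ω => ∑ k, (g (z k) - p k) * (l k ω - p k) with hY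
  set v : (X → ℝ) → ℝ := fun g => ∑ k, (g (z k) - p k)^2 with hv
  set sg : (X → ℝ) → ℝ := fun g => Real.sqrt (2 * v g * L) with hsg
  have hYmeas : ∀ g, Measurable (Y g) := by
    intro g
    apply Finset.measurable_sum
    intro k _
    exact (((hlmeas k).sub measurable_const).const_mul _)
  set B : Set Ω := ⋃ g ∈ G, {ω | sg g < Y g ω} with hB
  have hBmeas : MeasurableSet B := by
    refine MeasurableSet.biUnion G.countable_toSet (fun g _ => ?_)
    exact measurableSet_lt measurable_const (hYmeas g)
  have hLpos : 0 < L := lt_of_lt_of_le (by norm_num) hLhalf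
  -- bound each bad event
  have hone : ∀ g ∈ G, μ {ω | sg g < Y g ω} ≤ ENNReal.ofReal (δ / (2*M)) := by
    intro g hg
    rcases eq_or_lt_of_le (Finset.sum_nonneg (fun k _ => sq_nonneg (g (z k) - p k)) : 0 ≤ v g)
      with hv0 | hvpos
    · -- v g = 0 : Y g ≡ 0 and sg g = 0
      have hzero : ∀ k, g (z k) - p k = 0 := by
        intro k
        have := (Finset.sum_eq_zero_iff_of_nonneg
          (fun k _ => sq_nonneg (g (z k) - p k))).mp hv0.symm k (Finset.mem_univ k)
        exact pow_eq_zero_iff (by norm_num) |>.mp this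
      have hYz : ∀ ω, Y g ω = 0 := by
        intro ω; rw [hY]; simp only
        apply Finset.sum_eq_zero; intro k _; rw [hzero k]; ring
      have hvg0 : v g = 0 := hv0.symm
      have hsz : sg g = 0 := by rw [hsg]; simp only; rw [hvg0]; simp
      have : {ω | sg g < Y g ω} = ∅ := by
        ext ω; simp [hYz ω, hsz]
      rw [this]; simp
    · -- Hoeffding
      have hsub : {ω | sg g < Y g ω} ⊆ {ω | sg g ≤ ∑ k, (fun k ω => (g (z k) - p k) * (l k ω - p k)) k ω} := by
        intro ω hω
        simp only [Set.mem_setOf_eq] at hω ⊢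
        exact le_of_lt hω
      refine le_trans (measure_mono hsub) ?_
      have hXmeas : ∀ k, Measurable (fun ω => (g (z k) - p k) * (l k ω - p k)) := by
        intro k; exact ((hlmeas k).sub measurable_const).const_mul _
      have hXindep : iIndepFun
          (fun k ω => (g (z k) - p k) * (l k ω - p k)) μ := by
        have := hlindep.comp (fun k x => (g (z k) - p k) * (x - p k))
          (fun k => (measurable_id.sub measurable_const).const_mul _)
        exact this
      have hbd : ∀ k ω, |(g (z k) - p k) * (l k ω - p k)| ≤ |g (z k) - p k| := by
        intro k ω
        rw [abs_mul]
        calc |g (z k) - p k| * |l k ω - p k| ≤ |g (z k) - p k| * 1 :=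
              mul_le_mul_of_nonneg_left (hlp k ω) (abs_nonneg _)
          _ = |g (z k) - p k| := mul_one _
      have hmean : ∀ k, ∫ ω, (g (z k) - p k) * (l k ω - p k) ∂μ = 0 := by
        intro k
        rw [integral_const_mul]
        have hint : Integrable (l k) μ := integrable_of_bdd (hlmeas k) (b := 1)
          (fun ω => by rcases hl01 k ω with h | h <;> rw [h] <;> norm_num)
        rw [integral_sub hint (integrable_const _), integral_const]
        simp [hlmean k, hp]
      have hvsum : v g = ∑ k, |g (z k) - p k|^2 := by
        rw [hv]; simp [sq_abs]
      have key := hoeffding_bound μ (fun k ω => (g (z k) - p k) * (l k ω - p k)) hXmeas hXindep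
        (fun k => |g (z k) - p k|) (fun k => abs_nonneg _) hbd hmean (v g) (sg g)
        hvsum hvpos (Real.sqrt_nonneg _)
      have hsq : (sg g)^2 = 2 * v g * L := Real.sq_sqrt (by positivity)
      have hexp : exp (-((sg g)^2) / (2 * v g)) = δ / (2*M) := by
        rw [hsq]
        rw [show -(2 * v g * L) / (2 * v g) = -L by rw [neg_div, mul_comm (2 * v g) L, mul_div_assoc, div_self (mul_pos two_pos hvpos).ne', mul_one]]
        rw [hL, Real.exp_neg, Real.exp_log (by positivity)]
        rw [inv_div]
      rw [hexp] at key
      have hne : μ {ω | sg g ≤ ∑ k, (fun k ω => (g (z k) - p k) * (l k ω - p k)) k ω} ≠ ⊤ :=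
        measure_ne_top μ _
      rw [← ENNReal.ofReal_toReal hne]
      exact ENNReal.ofReal_le_ofReal key
  have hBbound : μ B ≤ ENNReal.ofReal δ := by
    refine le_trans (measure_biUnion_finset_le G _) ?_
    calc ∑ g ∈ G, μ {ω | sg g < Y g ω} ≤ ∑ g ∈ G, ENNReal.ofReal (δ / (2*M)) :=
          Finset.sum_le_sum (fun g hg => hone g hg)
      _ = G.card * ENNReal.ofReal (δ / (2*M)) := by
          rw [Finset.sum_const, nsmul_eq_mul]
      _ = ENNReal.ofReal (M * (δ / (2*M))) := by
          rw [hGcard, ENNReal.ofReal_mul (by positivity)]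
          congr 1
          simp [ENNReal.ofReal_natCast]
      _ ≤ ENNReal.ofReal δ := by
          apply ENNReal.ofReal_le_ofReal
          rw [show (M:ℝ) * (δ / (2*M)) = δ/2 by field_simp]
          linarith
  -- the deterministic implication
  have hsub : Bᶜ ⊆ {ω | Real.sqrt (∑ k, (ftil ω (z k) - fstar (z k)) ^ 2)
      ≤ 6 * Real.sqrt (Real.log (2 / δ) + Real.log M)} := by
    intro ω hω
    simp only [hB, Set.compl_iUnion, Set.mem_iInter, Set.mem_compl_iff, Set.mem_setOf_eq,
      not_lt] at hω
    simp only [Set.mem_setOf_eq]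
    set f : X → ℝ := ftil ω with hf
    obtain ⟨hfF, hminall⟩ := hftil ω
    have hmin := hminall fstar hfstar
    obtain ⟨g, hgG, hnear⟩ := hGcov f hfF
    set Q : ℝ := ∑ k, (f (z k) - p k)^2 with hQ
    have hQnn : 0 ≤ Q := Finset.sum_nonneg (fun k _ => sq_nonneg _)
    set r : ℝ := Real.sqrt Q with hr
    set a : ℝ := Real.sqrt (2*L) with ha
    have hr2 : r^2 = Q := Real.sq_sqrt hQnn
    have ha2 : a^2 = 2*L := Real.sq_sqrt (by positivity)
    have ha1 : 1 ≤ a := by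
      rw [ha, show (1:ℝ) = Real.sqrt 1 by rw [Real.sqrt_one]]
      exact Real.sqrt_le_sqrt (by linarith)
    set S : ℝ := ∑ k, (f (z k) - p k) * (l k ω - p k) with hSdef
    -- basic inequality
    have hQ2S : Q ≤ 2 * S := by
      have hexp : ∀ k ∈ Finset.univ, (f (z k) - l k ω)^2 =
          (f (z k) - p k)^2 - 2*((f (z k) - p k) * (l k ω - p k)) + (p k - l k ω)^2 := by
        intro k _; ring
      have hsum := Finset.sum_congr rfl hexp
      rw [Finset.sum_add_distrib, Finset.sum_sub_distrib, ← Finset.mul_sum] at hsum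
      rw [← hQ, ← hSdef] at hsum
      have hminp : ∑ k, (f (z k) - l k ω)^2 ≤ ∑ k, (p k - l k ω)^2 := hmin
      linarith
    -- S ≤ sg g + 1
    have hE : ∑ k, (f (z k) - g (z k)) * (l k ω - p k) ≤ 1 := by
      have hterm : ∀ k ∈ Finset.univ, (f (z k) - g (z k)) * (l k ω - p k) ≤ 1/N := by
        intro k _
        calc (f (z k) - g (z k)) * (l k ω - p k) ≤ |(f (z k) - g (z k)) * (l k ω - p k)| :=
              le_abs_self _
          _ = |f (z k) - g (z k)| * |l k ω - p k| := abs_mul _ _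
          _ ≤ (1/N) * 1 := mul_le_mul (hnear (z k)) (hlp k ω) (abs_nonneg _)
              (le_trans (abs_nonneg _) (hnear (z k)))
          _ = 1/N := mul_one _
      refine le_trans (Finset.sum_le_sum hterm) ?_
      rw [Finset.sum_const, Finset.card_univ, Fintype.card_fin, nsmul_eq_mul]
      rcases Nat.eq_zero_or_pos N with h | h
      · subst h; norm_num
      · rw [mul_one_div, div_self (by exact_mod_cast h.ne')]
    have hSYE : S = Y g ω + ∑ k, (f (z k) - g (z k)) * (l k ω - p k) := by
      rw [hSdef, hY]
      simp only
      rw [← Finset.sum_add_distrib]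
      apply Finset.sum_congr rfl
      intro k _; ring
    have hSle : S ≤ sg g + 1 := by
      rw [hSYE]
      have := hω g hgG
      linarith [hE, this]
    -- v g ≤ (r+1)^2
    have hA : ∑ k, (g (z k) - f (z k))^2 ≤ 1 := by
      have hterm : ∀ k ∈ Finset.univ, (g (z k) - f (z k))^2 ≤ (1/N)^2 := by
        intro k _
        rw [← sq_abs, abs_sub_comm]
        exact pow_le_pow_left₀ (abs_nonneg _) (hnear (z k)) 2
      refine le_trans (Finset.sum_le_sum hterm) ?_
      rw [Finset.sum_const, Finset.card_univ, Fintype.card_fin, nsmul_eq_mul]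
      rcases Nat.eq_zero_or_pos N with h | h
      · subst h; norm_num
      · have hN1 : (1:ℝ) ≤ N := by exact_mod_cast h
        have hNpos : (0:ℝ) < N := by linarith
        rw [show (N:ℝ) * (1/(N:ℝ))^2 = 1/N by field_simp]
        rw [div_le_one hNpos]
        exact hN1
    have hCS : ∑ k, (g (z k) - f (z k)) * (f (z k) - p k) ≤ r := by
      set W : ℝ := ∑ k, (g (z k) - f (z k)) * (f (z k) - p k) with hW
      have hAnn : (0:ℝ) ≤ ∑ k, (g (z k) - f (z k))^2 :=
        Finset.sum_nonneg (fun k _ => sq_nonneg _)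
      have h1 : W^2 ≤ (∑ k, (g (z k) - f (z k))^2) * Q := by
        rw [hW, hQ]
        exact Finset.sum_mul_sq_le_sq_mul_sq Finset.univ _ _
      have h2 : W ≤ Real.sqrt (W^2) := by
        rw [Real.sqrt_sq_eq_abs]; exact le_abs_self _
      refine h2.trans ?_
      have h3 : W^2 ≤ Q := h1.trans (mul_le_of_le_one_left hQnn hA)
      rw [hr]
      exact Real.sqrt_le_sqrt h3
    have hvg : v g ≤ (r + 1)^2 := by
      have hexpand : v g = ∑ k, (g (z k) - f (z k))^2
          + 2 * ∑ k, (g (z k) - f (z k)) * (f (z k) - p k) + Q := by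
        rw [hv, hQ]
        simp only
        rw [Finset.mul_sum, ← Finset.sum_add_distrib, ← Finset.sum_add_distrib]
        apply Finset.sum_congr rfl
        intro k _; ring
      have hsq : (r+1)^2 = r^2 + 2*r + 1 := by ring
      linarith
    -- conclude
    have hsgle : sg g ≤ (r + 1) * a := by
      rw [hsg]
      simp only
      have h1 : 2 * v g * L ≤ ((r+1)*a)^2 := by
        have : ((r+1)*a)^2 = (r+1)^2 * (2*L) := by rw [mul_pow, ha2]
        rw [this]
        nlinarith [hLpos]
      calc Real.sqrt (2 * v g * L) ≤ Real.sqrt (((r+1)*a)^2) := Real.sqrt_le_sqrt h1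
        _ = (r+1)*a := Real.sqrt_sq (by positivity)
    have hra : r ≤ 4 * a := by
      have h1 : r^2 ≤ 2*((r+1)*a) + 2 := by
        rw [hr2]
        calc Q ≤ 2 * S := hQ2S
          _ ≤ 2 * (sg g + 1) := by linarith
          _ ≤ 2*((r+1)*a) + 2 := by linarith
      exact alg_r (hr ▸ Real.sqrt_nonneg Q) ha1 h1
    have hfin : 4 * a ≤ 6 * Real.sqrt L := by
      have hsL : (Real.sqrt L)^2 = L := Real.sq_sqrt hLpos.le
      have h1 : (4*a)^2 ≤ (6 * Real.sqrt L)^2 := by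
        rw [mul_pow, mul_pow, ha2, hsL]
        linarith
      exact alg_s (by linarith) (by positivity) h1
    have : r ≤ 6 * Real.sqrt L := le_trans hra hfin
    rw [← hLsum]
    exact this
  -- final measure computation
  calc ENNReal.ofReal (1 - δ) = 1 - ENNReal.ofReal δ := by
        rw [← ENNReal.ofReal_one, ← ENNReal.ofReal_sub _ hδ0.le]
    _ ≤ 1 - μ B := tsub_le_tsub_left hBbound 1
    _ = μ Bᶜ := (prob_compl_eq_one_sub hBmeas).symm
    _ ≤ _ := measure_mono hsub
end

section
/- Let F be a class of real-valued functions on a set X, β > 0, and z₁,…,z_N ∈ X an arbitrary sequence; define Z₀ = ∅, Z_k = (z₁,…,z_k), and b_k(x) = sup{|f(x) − f'(x)| : f, f' ∈ F, ‖f − f'‖_{Z_{k−1}} ≤ β}. Then for every ε > 0, the number of indices k ∈ {1,…,N} with b_k(z_k) > ε is at most (β²/ε² + 1)·dim_E(F, ε). -/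
open MeasureTheory

/-- `‖f‖_Z` for a finite sequence `Z` of points: `(Σ_{z∈Z} f(z)²)^{1/2}`. -/
noncomputable def seqNorm {X : Type*} (Z : List X) (f : X → ℝ) : ℝ :=
  Real.sqrt ((Z.map fun z => (f z) ^ 2).sum)

/-- `x` is `ε`-dependent on the finite sequence `Z` with respect to `F`. -/
def EpsDependent {X : Type*} (F : Set (X → ℝ)) (ε : ℝ) (Z : List X) (x : X) : Prop :=
  ∀ f ∈ F, ∀ f' ∈ F, seqNorm Z (fun y => f y - f' y) ≤ ε → |f x - f' x| ≤ ε

/-- The `ε`-eluder dimension `dim_E(F, ε)`: the length of the longest sequence of points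
such that, for some `ε' ≥ ε`, every element is `ε'`-independent of its predecessors. -/
noncomputable def eluderDim {X : Type*} (F : Set (X → ℝ)) (ε : ℝ) : ℕ∞ :=
  sSup {n : ℕ∞ | ∃ L : List X, (L.length : ℕ∞) = n ∧ ∃ ε' ≥ ε,
    ∀ i : Fin L.length, ¬ EpsDependent F ε' (L.take i) (L.get i)}

/-- The bonus function `b(x) = sup{ |f(x) − f'(x)| : f, f' ∈ F, ‖f − f'‖_Z ≤ β }`. -/
noncomputable def bonus {X : Type*} (F : Set (X → ℝ)) (β : ℝ) (Z : List X) (x : X) : ℝ :=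
  sSup {v : ℝ | ∃ f ∈ F, ∃ f' ∈ F, seqNorm Z (fun y => f y - f' y) ≤ β ∧ v = |f x - f' x|}

lemma take_ofFn' {X : Type*} {N k : ℕ} (hk : k ≤ N) (z : Fin N → X) :
    (List.ofFn z).take k = List.ofFn (fun i : Fin k => z (Fin.castLE hk i)) := by
  apply List.ext_getElem
  · simp [min_eq_left hk]
  · intro n h₁ h₂
    simp [List.getElem_take]

lemma sum_sq_le_of_seqNorm_le {X : Type*} {Z : List X} {g : X → ℝ} {c : ℝ}
    (hc : 0 ≤ c) (h : seqNorm Z g ≤ c) :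
    (Z.map fun y => (g y) ^ 2).sum ≤ c ^ 2 := by
  have hnn : 0 ≤ (Z.map fun y => (g y) ^ 2).sum := by
    apply List.sum_nonneg
    intro x hx
    simp only [List.mem_map] at hx
    obtain ⟨y, _, rfl⟩ := hx
    positivity
  calc (Z.map fun y => (g y) ^ 2).sum = (Real.sqrt ((Z.map fun y => (g y) ^ 2).sum)) ^ 2 :=
        (Real.sq_sqrt hnn).symm
  _ ≤ c ^ 2 := pow_le_pow_left₀ (Real.sqrt_nonneg _) h 2

/-- the number of indices `k ∈ {1,…,N}` with `b_k(z_k) > ε` is at most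
`(β²/ε² + 1) · dim_E(F, ε)`. -/
theorem stmt2 (X : Type*) (F : Set (X → ℝ)) (β : ℝ) (hβ : 0 < β)
    (N : ℕ) (z : Fin N → X) (ε : ℝ) (hε : 0 < ε)
    (D : ℕ) (hdim : eluderDim F ε = (D : ℕ∞)) :
    ({k : Fin N | ε < bonus F β ((List.ofFn z).take k) (z k)}.ncard : ℝ)
      ≤ (β ^ 2 / ε ^ 2 + 1) * D := by
  classical
  set K : Set (Fin N) := {k : Fin N | ε < bonus F β ((List.ofFn z).take k) (z k)} with hK
  set d : ℕ := ⌊β ^ 2 / ε ^ 2⌋₊ + 1 with hd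
  -- length bound from eluder dimension
  have hlen : ∀ (l : List (Fin N)),
      (∀ p : Fin l.length, ¬ EpsDependent F ε ((l.take p).map z) (z (l.get p))) →
      l.length ≤ D := by
    intro l hl
    have hmem : ((l.map z).length : ℕ∞) ∈ {n : ℕ∞ | ∃ L : List X, (L.length : ℕ∞) = n ∧
        ∃ ε' ≥ ε, ∀ i : Fin L.length, ¬ EpsDependent F ε' (L.take i) (L.get i)} := by
      refine ⟨l.map z, rfl, ε, le_refl ε, ?_⟩
      intro p
      have hp : (p : ℕ) < l.length := by simpa using p.isLt
      have := hl ⟨p, hp⟩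
      simpa [List.map_take, List.get_eq_getElem] using this
    have hle := le_sSup hmem
    rw [← eluderDim, hdim] at hle
    simpa using hle
  -- main induction
  have key : ∀ k : ℕ, k ≤ N → ∃ Ls : Fin d → List (Fin N),
      (∀ j, ∀ i ∈ Ls j, (i : ℕ) < k) ∧
      (∀ j, (Ls j).Nodup) ∧
      (∀ j j', j ≠ j' → ∀ i ∈ Ls j, i ∉ Ls j') ∧
      (∀ i : Fin N, (i : ℕ) < k → i ∈ K → ∃ j, i ∈ Ls j) ∧
      (∀ j, ∀ p : Fin (Ls j).length,
        ¬ EpsDependent F ε (((Ls j).take p).map z) (z ((Ls j).get p))) := by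
    intro k
    induction k with
    | zero => exact fun _ => ⟨fun _ => [], by simp, by simp, by simp, by simp, by simp⟩
    | succ k ih =>
      intro hk1
      have hkN : k < N := hk1
      obtain ⟨Ls, hlt, hnd, hdisj, hcov, hQ⟩ := ih (le_of_lt hkN)
      set kf : Fin N := ⟨k, hkN⟩ with hkf
      by_cases hkK : kf ∈ K
      · -- find an independent list
        have hexj : ∃ j : Fin d, ¬ EpsDependent F ε ((Ls j).map z) (z kf) := by
          by_contra hall
          push_neg at hall
          -- extract witnesses from bonus
          have hbon : ε < bonus F β ((List.ofFn z).take kf) (z kf) := hkK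
          obtain ⟨v, hvS, hvε⟩ : ∃ v ∈ {v : ℝ | ∃ f ∈ F, ∃ f' ∈ F,
              seqNorm ((List.ofFn z).take kf) (fun y => f y - f' y) ≤ β ∧
              v = |f (z kf) - f' (z kf)|}, ε < v := by
            by_contra hno
            push_neg at hno
            exact absurd (Real.sSup_le hno hε.le) (not_le.mpr hbon)
          obtain ⟨f, hf, f', hf', hnb, hveq⟩ := hvS
          set g : X → ℝ := fun y => f y - f' y with hg
          set h : Fin N → ℝ := fun i => (g (z i)) ^ 2 with hh
          have hval : ε < |f (z kf) - f' (z kf)| := hveq ▸ hvε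
          -- each list has sum of squares > ε²
          have hbig : ∀ j : Fin d, ε ^ 2 < ((Ls j).map h).sum := by
            intro j
            have hdep := hall j
            have hnl : ¬ seqNorm ((Ls j).map z) g ≤ ε := by
              intro hle
              exact absurd (hdep f hf f' hf' hle) (not_le.mpr hval)
            have hlt' : ε < seqNorm ((Ls j).map z) g := lt_of_not_ge hnl
            have hnn : 0 ≤ (((Ls j).map z).map fun y => (g y) ^ 2).sum := by
              apply List.sum_nonneg
              intro x hx
              simp only [List.mem_map] at hx
              obtain ⟨y, _, rfl⟩ := hx
              positivity
            have := (Real.lt_sqrt (by positivity)).mp hlt'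
            calc ε ^ 2 < (((Ls j).map z).map fun y => (g y) ^ 2).sum := this
            _ = ((Ls j).map h).sum := by rw [List.map_map]; rfl
          -- total sum bounded by β²
          have hpre : ((((List.ofFn z).take kf).map fun y => (g y) ^ 2)).sum ≤ β ^ 2 :=
            sum_sq_le_of_seqNorm_le hβ.le hnb
          set T : Finset (Fin N) := Finset.univ.filter (fun i => (i : ℕ) < k) with hT
          have hTsum : (∑ i ∈ T, h i) ≤ β ^ 2 := by
            have heq : (((List.ofFn z).take kf).map fun y => (g y) ^ 2).sum
                = ∑ i : Fin k, h (Fin.castLE hkN.le i) := by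
              rw [show ((kf : Fin N) : ℕ) = k from rfl, take_ofFn' hkN.le z, List.map_ofFn,
                List.sum_ofFn]
              rfl
            have himg : T = Finset.univ.image (Fin.castLE hkN.le) := by
              ext i
              simp only [hT, Finset.mem_filter, Finset.mem_univ, true_and, Finset.mem_image]
              constructor
              · intro hi; exact ⟨⟨(i : ℕ), hi⟩, Fin.ext rfl⟩
              · rintro ⟨a, rfl⟩; exact a.isLt
            rw [himg, Finset.sum_image (by intro x _ y _ hxy; exact Fin.castLE_injective _ hxy)]
            rw [heq] at hpre
            exact hpre
          have hsubT : ∀ j, (Ls j).toFinset ⊆ T := by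
            intro j i hi
            simp only [List.mem_toFinset] at hi
            simp only [hT, Finset.mem_filter, Finset.mem_univ, true_and]
            exact hlt j i hi
          set B : Finset (Fin N) := Finset.univ.biUnion (fun j => (Ls j).toFinset) with hB
          have hdisjF : (↑(Finset.univ : Finset (Fin d)) : Set (Fin d)).PairwiseDisjoint
              (fun j => (Ls j).toFinset) := by
            intro a _ b _ hab
            simp only [Finset.disjoint_left]
            intro i hia hib
            simp only [List.mem_toFinset] at hia hib
            exact hdisj a b hab i hia hib
          have hBsum : (∑ j : Fin d, ((Ls j).map h).sum) = ∑ i ∈ B, h i := by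
            rw [hB, Finset.sum_biUnion hdisjF]
            congr 1
            funext j
            exact (List.sum_toFinset h (hnd j)).symm
          have hBT : B ⊆ T := by
            intro i hi
            simp only [hB, Finset.mem_biUnion, Finset.mem_univ, true_and] at hi
            obtain ⟨j, hj⟩ := hi
            exact hsubT j hj
          have hchain : (d : ℝ) * ε ^ 2 < β ^ 2 := by
            calc (d : ℝ) * ε ^ 2 = ∑ _j : Fin d, ε ^ 2 := by
                  rw [Finset.sum_const, Finset.card_univ, Fintype.card_fin, nsmul_eq_mul]
            _ < ∑ j : Fin d, ((Ls j).map h).sum :=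
                Finset.sum_lt_sum_of_nonempty (by simp [hd]) (fun j _ => hbig j)
            _ = ∑ i ∈ B, h i := hBsum
            _ ≤ ∑ i ∈ T, h i := by
                apply Finset.sum_le_sum_of_subset_of_nonneg hBT
                intro i _ _
                positivity
            _ ≤ β ^ 2 := hTsum
          have hdgt : β ^ 2 < (d : ℝ) * ε ^ 2 := by
            have h1 : β ^ 2 / ε ^ 2 < (d : ℝ) := by
              rw [hd]
              push_cast
              exact Nat.lt_floor_add_one _
            calc β ^ 2 = (β ^ 2 / ε ^ 2) * ε ^ 2 := by field_simp
            _ < (d : ℝ) * ε ^ 2 := by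
                apply mul_lt_mul_of_pos_right h1 (by positivity)
          linarith
        obtain ⟨j₀, hind⟩ := hexj
        refine ⟨Function.update Ls j₀ (Ls j₀ ++ [kf]), ?_, ?_, ?_, ?_, ?_⟩
        · intro j i hi
          rcases eq_or_ne j j₀ with rfl | hne
          · rw [Function.update_self] at hi
            rcases List.mem_append.mp hi with h1 | h1
            · exact Nat.lt_succ_of_lt (hlt _ i h1)
            · simp only [List.mem_singleton] at h1
              subst h1
              exact Nat.lt_succ_self k
          · rw [Function.update_of_ne hne] at hi
            exact Nat.lt_succ_of_lt (hlt j i hi)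
        · intro j
          rcases eq_or_ne j j₀ with rfl | hne
          · rw [Function.update_self, List.nodup_append]
            refine ⟨hnd _, List.nodup_singleton _, ?_⟩
            intro i hi b hb hib
            simp only [List.mem_singleton] at hb
            subst hb hib
            exact absurd (hlt _ _ hi) (lt_irrefl k)
          · rw [Function.update_of_ne hne]; exact hnd j
        · intro j j' hjj i hi hi'
          have hmem : ∀ jj, ∀ i' : Fin N, i' ∈ Function.update Ls j₀ (Ls j₀ ++ [kf]) jj →
              i' ∈ Ls jj ∨ (jj = j₀ ∧ i' = kf) := by
            intro jj i' hi'
            rcases eq_or_ne jj j₀ with rfl | hne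
            · rw [Function.update_self] at hi'
              rcases List.mem_append.mp hi' with h1 | h1
              · exact Or.inl h1
              · simp only [List.mem_singleton] at h1; exact Or.inr ⟨rfl, h1⟩
            · rw [Function.update_of_ne hne] at hi'; exact Or.inl hi'
          rcases hmem j i hi with h1 | ⟨rfl, rfl⟩
          · rcases hmem j' i hi' with h2 | ⟨rfl, rfl⟩
            · exact hdisj j j' hjj i h1 h2
            · exact absurd (hlt j _ h1) (lt_irrefl k)
          · rcases hmem j' kf hi' with h2 | ⟨h3, _⟩
            · exact absurd (hlt j' _ h2) (lt_irrefl k)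
            · exact hjj h3.symm
        · intro i hik hiK
          rcases Nat.lt_succ_iff_lt_or_eq.mp hik with h1 | h1
          · obtain ⟨j, hj⟩ := hcov i h1 hiK
            refine ⟨j, ?_⟩
            rcases eq_or_ne j j₀ with rfl | hne
            · rw [Function.update_self]; exact List.mem_append_left _ hj
            · rw [Function.update_of_ne hne]; exact hj
          · refine ⟨j₀, ?_⟩
            rw [Function.update_self]
            have : i = kf := Fin.ext h1
            subst this
            exact List.mem_append_right _ (List.mem_singleton_self _)
        · intro j
          rcases eq_or_ne j j₀ with rfl | hne
          · rw [Function.update_self]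
            intro p
            have hplen : (p : ℕ) < (Ls j).length + 1 := by
              simpa using p.isLt
            rcases Nat.lt_succ_iff_lt_or_eq.mp hplen with hp | hp
            · have htake : ((Ls j ++ [kf]).take p) = (Ls j).take p :=
                List.take_append_of_le_length (le_of_lt hp)
              have hget : (Ls j ++ [kf]).get p = (Ls j).get ⟨p, hp⟩ := by
                simp only [List.get_eq_getElem]
                exact List.getElem_append_left hp
              rw [htake, hget]
              exact hQ j ⟨p, hp⟩
            · have htake : ((Ls j ++ [kf]).take p) = Ls j := by
                rw [hp, List.take_append_of_le_length (le_refl _), List.take_length]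
              have hget : (Ls j ++ [kf]).get p = kf := by
                simp only [List.get_eq_getElem]
                exact List.getElem_concat_length hp _
              rw [htake, hget]
              exact hind
          · rw [Function.update_of_ne hne]
            exact hQ j
      · refine ⟨Ls, fun j i hi => Nat.lt_succ_of_lt (hlt j i hi), hnd, hdisj, ?_, hQ⟩
        intro i hik hiK
        rcases Nat.lt_succ_iff_lt_or_eq.mp hik with h1 | h1
        · exact hcov i h1 hiK
        · exact absurd (show kf ∈ K from (Fin.ext h1 : i = kf) ▸ hiK) hkK
  obtain ⟨Ls, hlt, hnd, hdisj, hcov, hQ⟩ := key N (le_refl N)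
  set B : Finset (Fin N) := Finset.univ.biUnion (fun j => (Ls j).toFinset) with hB
  have hKB : K ⊆ ↑B := by
    intro i hi
    obtain ⟨j, hj⟩ := hcov i i.isLt hi
    simp only [hB, Finset.coe_biUnion, Set.mem_iUnion, Finset.mem_coe, List.mem_toFinset,
      Finset.mem_univ, Set.mem_setOf_eq, exists_prop, true_and]
    exact ⟨j, hj⟩
  have hcard : K.ncard ≤ d * D := by
    calc K.ncard ≤ (↑B : Set (Fin N)).ncard :=
          Set.ncard_le_ncard hKB (Set.toFinite _)
    _ = B.card := Set.ncard_coe_finset B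
    _ ≤ ∑ j : Fin d, (Ls j).toFinset.card := Finset.card_biUnion_le
    _ ≤ ∑ j : Fin d, (Ls j).length :=
        Finset.sum_le_sum (fun j _ => List.toFinset_card_le _)
    _ ≤ ∑ _j : Fin d, D := Finset.sum_le_sum (fun j _ => hlen (Ls j) (hQ j))
    _ = d * D := by rw [Finset.sum_const, Finset.card_univ, Fintype.card_fin, smul_eq_mul]
  have hreal : (K.ncard : ℝ) ≤ (d : ℝ) * D := by
    calc (K.ncard : ℝ) ≤ ((d * D : ℕ) : ℝ) := by exact_mod_cast hcard
    _ = (d : ℝ) * D := by push_cast; ring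
  refine hreal.trans ?_
  apply mul_le_mul_of_nonneg_right _ (Nat.cast_nonneg D)
  rw [hd]
  push_cast
  have := Nat.floor_le (show (0:ℝ) ≤ β ^ 2 / ε ^ 2 by positivity)
  linarith
end

section
/- There is an absolute constant C > 0 such that the following holds. Let F be a class of functions from a set X to [0,1], β > 0, and z₁,…,z_N ∈ X an arbitrary sequence; define Z₀ = ∅, Z_k = (z₁,…,z_k), and b_k(x) = sup{|f(x) − f'(x)| : f, f' ∈ F, ‖f − f'‖_{Z_{k−1}} ≤ β}. Then Σ_{k=1}^N b_k(z_k) ≤ 1 + dim_E(F, 1/N) + C·β·√(dim_E(F, 1/N)·N). -/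
open MeasureTheory

/-! ### Auxiliary machinery -/

/-- An `ε`-independent sequence: every element is `ε`-independent of its predecessors. -/
def St4Good {X : Type*} (F : Set (X → ℝ)) (ε : ℝ) (L : List X) : Prop :=
  ∀ i : Fin L.length, ¬ EpsDependent F ε (L.take i) (L.get i)

lemma st4Good_nil {X : Type*} (F : Set (X → ℝ)) (ε : ℝ) : St4Good F ε ([] : List X) :=
  fun i => absurd i.2 (by simp)

lemma st4Good_append {X : Type*} {F : Set (X → ℝ)} {ε : ℝ} {L : List X} {x : X}
    (hL : St4Good F ε L) (hx : ¬ EpsDependent F ε L x) : St4Good F ε (L ++ [x]) := by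
  intro i
  have hi : (i : ℕ) < L.length + 1 := by simpa using i.2
  rcases Nat.lt_or_ge (i : ℕ) L.length with h | h
  · have h1 : (L ++ [x]).take i = L.take i := List.take_append_of_le_length h.le
    have h2 : (L ++ [x]).get i = L.get ⟨i, h⟩ := by
      rw [List.get_eq_getElem, List.get_eq_getElem, List.getElem_append_left]
    rw [h1, h2]
    exact hL ⟨i, h⟩
  · have h' : (i : ℕ) = L.length := le_antisymm (Nat.lt_succ_iff.mp hi) h
    have h1 : (L ++ [x]).take i = L := by
      rw [h', List.take_append_of_le_length le_rfl, List.take_length]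
    have h2 : (L ++ [x]).get i = x := by
      rw [List.get_eq_getElem]
      simp only [h']
      simp
    rw [h1, h2]
    exact hx

lemma st4_filterMap_if {ι γ : Type*} (p : ι → Prop) [DecidablePred p] (g : ι → γ) (L : List ι) :
    L.filterMap (fun i => if p i then some (g i) else none)
      = (L.filter (fun i => decide (p i))).map g := by
  induction L with
  | nil => simp
  | cons x t ih => by_cases h : p x <;> simp [List.filterMap_cons, List.filter_cons, h, ih]

lemma st4_filter_sum {ι : Type*} (p : ι → Prop) [DecidablePred p] (h : ι → ℝ) (L : List ι) :
    ((L.filter fun i => decide (p i)).map h).sum = (L.map fun i => if p i then h i else 0).sum := by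
  induction L with
  | nil => simp
  | cons x t ih => by_cases hx : p x <;> simp [List.filter_cons, hx, ih]

lemma st4_sum_swap {ι J : Type*} (s : Finset J) (f : J → ι → ℝ) (L : List ι) :
    ∑ j ∈ s, (L.map (f j)).sum = (L.map fun i => ∑ j ∈ s, f j i).sum := by
  induction L with
  | nil => simp
  | cons x t ih => simp [Finset.sum_add_distrib, ih]

lemma st4_sqrt_sum (M : ℕ) :
    ∑ s ∈ Finset.range M, 1 / Real.sqrt (s + 1) ≤ 2 * Real.sqrt M := by
  induction M with
  | zero => simp
  | succ M ih =>
    rw [Finset.sum_range_succ]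
    have h1 : Real.sqrt (M * (M + 1)) ≤ M + 1/2 := by
      rw [show ((M : ℝ) * (M + 1)) = (M + 1/2)^2 - 1/4 by ring]
      calc Real.sqrt ((M + 1/2)^2 - 1/4) ≤ Real.sqrt ((M + 1/2)^2) :=
            Real.sqrt_le_sqrt (by nlinarith)
        _ = M + 1/2 := Real.sqrt_sq (by positivity)
    have h2 : Real.sqrt (M * (M + 1)) = Real.sqrt M * Real.sqrt (M + 1) :=
      Real.sqrt_mul (by positivity) _
    have hs : (0:ℝ) < Real.sqrt (M + 1) := Real.sqrt_pos.mpr (by positivity)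
    have h3 : 1 / Real.sqrt (M + 1) ≤ 2 * Real.sqrt (M + 1) - 2 * Real.sqrt M := by
      rw [div_le_iff₀ hs]
      have hsq : Real.sqrt (M+1) * Real.sqrt (M+1) = (M : ℝ) + 1 :=
        Real.mul_self_sqrt (by positivity)
      nlinarith [h1, h2, hsq]
    have hcast : (Real.sqrt ((M:ℝ) + 1)) = Real.sqrt ((M + 1 : ℕ) : ℝ) := by push_cast; ring_nf
    calc ∑ s ∈ Finset.range M, 1 / Real.sqrt (s + 1) + 1 / Real.sqrt (M + 1)
        ≤ 2 * Real.sqrt M + (2 * Real.sqrt (M + 1) - 2 * Real.sqrt M) := by gcongr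
      _ = 2 * Real.sqrt ((M + 1 : ℕ) : ℝ) := by rw [← hcast]; ring

lemma st4_assign {X : Type*} (F : Set (X → ℝ))
    (β ε : ℝ) (hε : 0 < ε)
    (N : ℕ) (ζ : ℕ → X) (m : ℕ) (hm : β ^ 2 / ε ^ 2 < (m : ℝ)) (hm0 : 0 < m) :
    ∀ k, k ≤ N → ∃ a : ℕ → Option (Fin m),
      (∀ i, k ≤ i → a i = none) ∧
      (∀ i, i < k → ((a i).isSome ↔ ε < bonus F β ((List.range i).map ζ) (ζ i))) ∧
      (∀ j : Fin m, St4Good F ε ((List.range k).filterMap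
          (fun i => if a i = some j then some (ζ i) else none))) := by
  intro k
  induction k with
  | zero =>
    intro _
    refine ⟨fun _ => none, fun _ _ => rfl, fun i hi => absurd hi (by omega), fun j => ?_⟩
    simpa using st4Good_nil F ε
  | succ k ih =>
    intro hk1
    obtain ⟨a, h1, h2, h3⟩ := ih (by omega)
    by_cases hw : ε < bonus F β ((List.range k).map ζ) (ζ k)
    · have hSne : {v : ℝ | ∃ f ∈ F, ∃ f' ∈ F,
          seqNorm ((List.range k).map ζ) (fun y => f y - f' y) ≤ β ∧
            v = |f (ζ k) - f' (ζ k)|}.Nonempty := by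
        by_contra hc
        rw [Set.not_nonempty_iff_eq_empty] at hc
        rw [bonus, hc, Real.sSup_empty] at hw
        linarith
      obtain ⟨v, ⟨f, hf, f', hf', hnorm, hveq⟩, hεv⟩ := exists_lt_of_lt_csSup hSne hw
      have hgap : ε < |f (ζ k) - f' (ζ k)| := hveq ▸ hεv
      have hj : ∃ j : Fin m, ¬ EpsDependent F ε ((List.range k).filterMap
          (fun i => if a i = some j then some (ζ i) else none)) (ζ k) := by
        by_contra hall
        push_neg at hall
        set Q : Fin m → ℝ := fun j => (((List.range k).filterMap
            (fun i => if a i = some j then some (ζ i) else none)).map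
            (fun y => (f y - f' y) ^ 2)).sum with hQ
        have hQlb : ∀ j : Fin m, ε ^ 2 < Q j := by
          intro j
          have hdep := hall j
          have hsn : ε < seqNorm ((List.range k).filterMap
              (fun i => if a i = some j then some (ζ i) else none)) (fun y => f y - f' y) := by
            by_contra hle
            push_neg at hle
            exact absurd (hdep f hf f' hf' hle) (not_le.mpr hgap)
          have := (Real.lt_sqrt hε.le).mp hsn
          simpa [seqNorm, hQ] using this
        have hQsum : ∑ j : Fin m, Q j
            ≤ ((List.range k).map (fun i => (f (ζ i) - f' (ζ i)) ^ 2)).sum := by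
          have hQeq : ∀ j : Fin m, Q j = ((List.range k).map
              (fun i => if a i = some j then (f (ζ i) - f' (ζ i)) ^ 2 else 0)).sum := by
            intro j
            simp only [hQ]
            rw [st4_filterMap_if (fun i => a i = some j) ζ (List.range k)]
            rw [List.map_map]
            simp only [Function.comp_def]
            rw [st4_filter_sum (fun i => a i = some j)
              (fun i => (f (ζ i) - f' (ζ i)) ^ 2) (List.range k)]
          calc ∑ j : Fin m, Q j
              = ((List.range k).map (fun i => ∑ j : Fin m,
                  if a i = some j then (f (ζ i) - f' (ζ i)) ^ 2 else 0)).sum := by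
                rw [Finset.sum_congr rfl (fun j _ => hQeq j)]
                exact st4_sum_swap Finset.univ _ _
            _ ≤ ((List.range k).map (fun i => (f (ζ i) - f' (ζ i)) ^ 2)).sum := by
                apply List.sum_le_sum
                intro i _
                cases ha : a i with
                | none => simp [ha, sq_nonneg]
                | some j0 =>
                  simp only [ha, Option.some.injEq]
                  rw [Finset.sum_ite_eq Finset.univ j0 (fun _ => (f (ζ i) - f' (ζ i)) ^ 2)]
                  simp
        have hβsum : ((List.range k).map (fun i => (f (ζ i) - f' (ζ i)) ^ 2)).sum ≤ β ^ 2 := by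
          have h0 : (0:ℝ) ≤ ((List.range k).map (fun i => (f (ζ i) - f' (ζ i)) ^ 2)).sum :=
            List.sum_nonneg (by intro x hx; simp only [List.mem_map] at hx
                                obtain ⟨i, _, rfl⟩ := hx; exact sq_nonneg _)
          have hsn : seqNorm ((List.range k).map ζ) (fun y => f y - f' y)
              = Real.sqrt (((List.range k).map (fun i => (f (ζ i) - f' (ζ i)) ^ 2)).sum) := by
            simp [seqNorm, List.map_map, Function.comp_def]
          rw [hsn] at hnorm
          calc ((List.range k).map (fun i => (f (ζ i) - f' (ζ i)) ^ 2)).sum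
              = (Real.sqrt (((List.range k).map (fun i => (f (ζ i) - f' (ζ i)) ^ 2)).sum)) ^ 2 :=
                (Real.sq_sqrt h0).symm
            _ ≤ β ^ 2 := by
                apply pow_le_pow_left₀ (Real.sqrt_nonneg _) hnorm
        have hlb : (m : ℝ) * ε ^ 2 < ∑ j : Fin m, Q j := by
          have : ∑ _j : Fin m, ε ^ 2 < ∑ j : Fin m, Q j :=
            Finset.sum_lt_sum_of_nonempty (Finset.univ_nonempty_iff.mpr ⟨⟨0, hm0⟩⟩)
              (fun j _ => hQlb j)
          simpa [Finset.sum_const, nsmul_eq_mul] using this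
        have hub : β ^ 2 < (m : ℝ) * ε ^ 2 := by
          have := (div_lt_iff₀ (by positivity : (0:ℝ) < ε ^ 2)).mp hm
          linarith
        linarith
      obtain ⟨j, hjind⟩ := hj
      classical
      refine ⟨fun i => if i = k then some j else a i, ?_, ?_, ?_⟩
      · intro i hi
        have : i ≠ k := by omega
        simp [this, h1 i (by omega)]
      · intro i hi
        by_cases hik : i = k
        · subst hik; simp [hw]
        · have := h2 i (by omega)
          simpa [hik] using this
      · intro j'
        have hcongr : (List.range k).filterMap
            (fun i => if (if i = k then some j else a i) = some j' then some (ζ i) else none)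
            = (List.range k).filterMap (fun i => if a i = some j' then some (ζ i) else none) := by
          apply List.filterMap_congr
          intro i hi
          have : i ≠ k := by simp at hi; omega
          simp [this]
        rw [List.range_succ, List.filterMap_append, hcongr]
        by_cases hjj : j' = j
        · subst hjj
          have : [k].filterMap
              (fun i => if (if i = k then some j' else a i) = some j' then some (ζ i) else none)
              = [ζ k] := by simp
          rw [this]
          exact st4Good_append (h3 j') hjind
        · have : [k].filterMap
              (fun i => if (if i = k then some j else a i) = some j' then some (ζ i) else none)
              = [] := by simp [Ne.symm hjj]
          rw [this, List.append_nil]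
          exact h3 j'
    · refine ⟨a, fun i hi => h1 i (by omega), ?_, ?_⟩
      · intro i hi
        by_cases hik : i = k
        · subst hik
          simp [h1 i le_rfl, hw]
        · exact h2 i (by omega)
      · intro j'
        rw [List.range_succ, List.filterMap_append]
        have : [k].filterMap (fun i => if a i = some j' then some (ζ i) else none) = [] := by
          simp [h1 k le_rfl]
        rw [this, List.append_nil]
        exact h3 j'

lemma st4_card {X : Type*} (F : Set (X → ℝ))
    (β ε : ℝ) (hε : 0 < ε)
    (N : ℕ) (hN : 0 < N) (z : Fin N → X) (D : ℕ)
    (hdim : ∀ L : List X, St4Good F ε L → L.length ≤ D) :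
    (Finset.univ.filter fun k : Fin N =>
        ε < bonus F β ((List.ofFn z).take (k : ℕ)) (z k)).card
      ≤ (⌊β ^ 2 / ε ^ 2⌋₊ + 1) * D := by
  classical
  set ζ : ℕ → X := fun i => if h : i < N then z ⟨i, h⟩ else z ⟨0, hN⟩ with hζ
  have hζz : ∀ k : Fin N, ζ (k : ℕ) = z k := by
    intro k; simp only [hζ, k.2, dif_pos]
  have hprefix : ∀ k : ℕ, k ≤ N → (List.ofFn z).take k = (List.range k).map ζ := by
    intro k hk
    apply List.ext_getElem
    · simp [Nat.min_eq_left hk]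
    · intro n h1 h2
      have hn : n < N := by
        simp only [List.length_take, List.length_ofFn] at h1; omega
      rw [List.getElem_take, List.getElem_ofFn, List.getElem_map, List.getElem_range]
      simp only [hζ, hn, dif_pos]
  set m := ⌊β ^ 2 / ε ^ 2⌋₊ + 1 with hm
  have hmr : β ^ 2 / ε ^ 2 < (m : ℝ) := by
    rw [hm]; push_cast; exact Nat.lt_floor_add_one _
  obtain ⟨a, h1, h2, h3⟩ := st4_assign F β ε hε N ζ m hmr (Nat.succ_pos _) N le_rfl
  have hTcard : ∀ j : Fin m, ((Finset.range N).filter (fun i => a i = some j)).card ≤ D := by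
    intro j
    have hlen : ((List.range N).filterMap
        (fun i => if a i = some j then some (ζ i) else none)).length ≤ D := hdim _ (h3 j)
    rw [st4_filterMap_if (fun i => a i = some j) ζ (List.range N), List.length_map] at hlen
    have hnd : ((List.range N).filter (fun i => decide (a i = some j))).Nodup :=
      List.nodup_range.filter _
    have hc : ((List.range N).filter (fun i => decide (a i = some j))).toFinset.card
        = ((List.range N).filter (fun i => decide (a i = some j))).length :=
      List.toFinset_card_of_nodup hnd
    have hfin : ((List.range N).filter (fun i => decide (a i = some j))).toFinset
        = (Finset.range N).filter (fun i => a i = some j) := by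
      rw [List.toFinset_filter]
      have hrf : (List.range N).toFinset = Finset.range N := by ext i; simp
      rw [hrf]
      apply Finset.filter_congr
      intro i _
      simp
    rw [hfin] at hc
    rw [hc]; exact hlen
  have hkey : ∀ k : Fin N,
      (ε < bonus F β ((List.ofFn z).take (k : ℕ)) (z k)) ↔ (a (k : ℕ)).isSome := by
    intro k
    rw [hprefix k k.2.le, ← hζz k]
    exact (h2 k k.2).symm
  have hST : (Finset.univ.filter fun k : Fin N =>
      ε < bonus F β ((List.ofFn z).take (k : ℕ)) (z k)).card
      ≤ ((Finset.range N).filter (fun i => (a i).isSome)).card := by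
    refine Finset.card_le_card_of_injOn (fun k => (k : ℕ)) ?_ ?_
    · intro k hk
      simp only [Finset.mem_coe, Finset.mem_filter, Finset.mem_univ, true_and] at hk
      simp only [Finset.mem_coe, Finset.mem_filter, Finset.mem_range]
      exact ⟨k.2, (hkey k).mp hk⟩
    · intro x _ y _ hxy
      exact Fin.val_injective hxy
  have hTB : ((Finset.range N).filter (fun i => (a i).isSome)).card
      ≤ ∑ j : Fin m, ((Finset.range N).filter (fun i => a i = some j)).card := by
    have hsub : (Finset.range N).filter (fun i => (a i).isSome)
        ⊆ Finset.univ.biUnion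
          (fun j : Fin m => (Finset.range N).filter (fun i => a i = some j)) := by
      intro i hi
      simp only [Finset.mem_filter, Finset.mem_range] at hi
      obtain ⟨j, hj⟩ := Option.isSome_iff_exists.mp hi.2
      exact Finset.mem_biUnion.mpr ⟨j, Finset.mem_univ _,
        Finset.mem_filter.mpr ⟨Finset.mem_range.mpr hi.1, hj⟩⟩
    exact le_trans (Finset.card_le_card hsub) (Finset.card_biUnion_le)
  calc (Finset.univ.filter fun k : Fin N =>
      ε < bonus F β ((List.ofFn z).take (k : ℕ)) (z k)).card
      ≤ ∑ j : Fin m, ((Finset.range N).filter (fun i => a i = some j)).card :=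
        le_trans hST hTB
    _ ≤ ∑ _j : Fin m, D := Finset.sum_le_sum (fun j _ => hTcard j)
    _ = m * D := by simp [Finset.sum_const, mul_comm]

lemma st4_bonus_le_one {X : Type*} {F : Set (X → ℝ)}
    (hF : ∀ f ∈ F, ∀ x, f x ∈ Set.Icc (0:ℝ) 1) (β : ℝ) (Z : List X) (x : X) :
    bonus F β Z x ≤ 1 := by
  apply Real.sSup_le _ zero_le_one
  rintro v ⟨f, hf, f', hf', -, rfl⟩
  have h1 := hF f hf x
  have h2 := hF f' hf' x
  rw [Set.mem_Icc] at h1 h2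
  rw [abs_le]
  constructor <;> linarith [h1.1, h1.2, h2.1, h2.2]

lemma st4_dim {X : Type*} {F : Set (X → ℝ)} {ε₀ : ℝ} {D : ℕ}
    (hD : eluderDim F ε₀ = (D : ℕ∞)) {ε : ℝ} (hε : ε₀ ≤ ε) :
    ∀ L : List X, St4Good F ε L → L.length ≤ D := by
  intro L hL
  have hmem : (L.length : ℕ∞) ∈ {n : ℕ∞ | ∃ L' : List X, ((L'.length : ℕ∞)) = n ∧ ∃ ε' ≥ ε₀,
      ∀ i : Fin L'.length, ¬ EpsDependent F ε' (L'.take i) (L'.get i)} :=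
    ⟨L, rfl, ε, hε, hL⟩
  have h := le_sSup hmem
  rw [show sSup {n : ℕ∞ | ∃ L' : List X, ((L'.length : ℕ∞)) = n ∧ ∃ ε' ≥ ε₀,
      ∀ i : Fin L'.length, ¬ EpsDependent F ε' (L'.take i) (L'.get i)} = eluderDim F ε₀ from rfl,
    hD] at h
  exact_mod_cast h

theorem stmt4 :
    ∃ C : ℝ, 0 < C ∧
      ∀ (X : Type*) (F : Set (X → ℝ)),
        (∀ f ∈ F, ∀ x, f x ∈ Set.Icc (0 : ℝ) 1) →
        ∀ β : ℝ, 0 < β →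
        ∀ (N : ℕ) (z : Fin N → X) (D : ℕ), eluderDim F (1 / N) = (D : ℕ∞) →
        ∑ k : Fin N, bonus F β ((List.ofFn z).take k) (z k)
          ≤ 1 + (D : ℝ) + C * β * Real.sqrt ((D : ℝ) * N) := by
  classical
  refine ⟨2, by norm_num, ?_⟩
  intro X F hF β hβ N z D hD
  rcases Nat.eq_zero_or_pos N with hN0 | hN
  · subst hN0
    have h0 : ∑ k : Fin 0, bonus F β ((List.ofFn z).take k) (z k) = 0 := by simp
    rw [h0]
    positivity
  have hNR : (0:ℝ) < N := by exact_mod_cast hN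
  set w : Fin N → ℝ := fun k => bonus F β ((List.ofFn z).take (k:ℕ)) (z k) with hw
  have hw1 : ∀ k, w k ≤ 1 := fun k => st4_bonus_le_one hF β _ _
  set σ := Tuple.sort w with hσ
  have hmono : Monotone (w ∘ σ) := Tuple.monotone_sort w
  set u : Fin N → ℝ := w ∘ σ with hu
  have hdim : ∀ ε : ℝ, 1/(N:ℝ) ≤ ε → ∀ L : List X, St4Good F ε L → L.length ≤ D :=
    fun ε hε => st4_dim hD hε
  have hcard : ∀ (t : Fin N) (ε : ℝ), 1/(N:ℝ) ≤ ε → ε < u t →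
      (N - (t:ℕ) : ℕ) ≤ (⌊β^2/ε^2⌋₊ + 1) * D := by
    intro t ε hε hεu
    have hε0 : 0 < ε := lt_of_lt_of_le (by positivity) hε
    have h1 : (Finset.Ici t).card ≤ (Finset.univ.filter fun k : Fin N =>
        ε < bonus F β ((List.ofFn z).take (k:ℕ)) (z k)).card := by
      refine Finset.card_le_card_of_injOn (fun t' => σ t') ?_ ?_
      · intro t' ht'
        simp only [Finset.mem_coe, Finset.mem_Ici] at ht'
        simp only [Finset.mem_coe, Finset.mem_filter, Finset.mem_univ, true_and]
        exact lt_of_lt_of_le hεu (hmono ht')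
      · intro x _ y _ hxy
        exact σ.injective hxy
    rw [Fin.card_Ici] at h1
    exact le_trans h1 (st4_card F β ε hε0 N hN z D (hdim ε hε))
  have hub : ∀ t : Fin N, (t:ℕ) < N - D →
      u t ≤ 1/(N:ℝ) + β * Real.sqrt ((D:ℝ) / ((N - (t:ℕ) - D : ℕ) : ℝ)) := by
    intro t ht
    set M : ℕ := N - (t:ℕ) - D with hM
    have hM0 : 0 < M := by omega
    set B : ℝ := β * Real.sqrt ((D:ℝ)/(M:ℝ)) with hB
    have hB0 : 0 ≤ B := by positivity
    have hN1 : 0 ≤ 1/(N:ℝ) := by positivity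
    have hmax : u t ≤ max (1/(N:ℝ)) B := by
      by_contra hcon
      push_neg at hcon
      set c := max (1/(N:ℝ)) B with hc
      set ε := (c + u t)/2 with hε'
      have hc1 : 1/(N:ℝ) ≤ c := le_max_left _ _
      have hcB : B ≤ c := le_max_right _ _
      have hcu : c < u t := hcon
      have hεgt : c < ε := by rw [hε']; linarith
      have hεlt : ε < u t := by rw [hε']; linarith
      have hεN : 1/(N:ℝ) ≤ ε := le_trans hc1 hεgt.le
      have hε0 : 0 < ε := lt_of_lt_of_le (by positivity) hεN
      have hkey := hcard t ε hεN hεlt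
      have hNtD : (N - (t:ℕ) : ℕ) = M + D := by omega
      have hfloor : ((⌊β^2/ε^2⌋₊ : ℕ) : ℝ) ≤ β^2/ε^2 :=
        Nat.floor_le (by positivity)
      rcases Nat.eq_zero_or_pos D with hD0 | hDpos
      · rw [hD0] at hkey
        simp at hkey
        omega
      · have hDR : (0:ℝ) < D := by exact_mod_cast hDpos
        have hMR : (0:ℝ) < M := by exact_mod_cast hM0
        have hBpos : 0 < B := by rw [hB]; positivity
        have hεB : B < ε := lt_of_le_of_lt hcB hεgt
        have hBM : B^2 * M = β^2 * D := by
          rw [hB, mul_pow, Real.sq_sqrt (by positivity)]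
          field_simp
        have hεB2 : B^2 < ε^2 := by nlinarith [hεB, hB0]
        have hq : β^2 * D < ε^2 * M := by
          have hmm := mul_lt_mul_of_pos_right hεB2 hMR
          rwa [hBM] at hmm
        have hkeyR : ((M:ℝ) + D) ≤ (β^2/ε^2 + 1) * D := by
          have h' : ((N - (t:ℕ) : ℕ):ℝ) ≤ (((⌊β^2/ε^2⌋₊ + 1) * D : ℕ):ℝ) := by
            exact_mod_cast hkey
          rw [hNtD] at h'
          push_cast at h'
          have h'' := mul_le_mul_of_nonneg_right (add_le_add_right hfloor 1) (le_of_lt hDR)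
          linarith [h', h'']
        have h3 : (β^2/ε^2) * ε^2 = β^2 :=
          div_mul_cancel₀ _ (pow_ne_zero 2 (ne_of_gt hε0))
        have h4 := mul_le_mul_of_nonneg_right hkeyR (sq_nonneg ε)
        have h5 : (β^2/ε^2 + 1) * D * ε^2 = β^2 * D + D * ε^2 := by
          have hh : (β^2/ε^2 + 1) * (D:ℝ) * ε^2 = ((β^2/ε^2) * ε^2) * D + D * ε^2 := by ring
          rw [hh, h3]
        have h6 : ((M:ℝ) + D) * ε^2 = M * ε^2 + D * ε^2 := by ring
        linarith [h4, h5, h6, hq]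
    calc u t ≤ max (1/(N:ℝ)) B := hmax
      _ ≤ 1/(N:ℝ) + B := max_le (by linarith) (by linarith)
  -- final summation
  have hsum : ∑ k : Fin N, w k = ∑ t : Fin N, u t := (Equiv.sum_comp σ w).symm
  set M' : ℕ := N - D with hM'
  have hterm : ∀ t : Fin N, u t ≤ (if (t:ℕ) < M' then
      1/(N:ℝ) + β * Real.sqrt ((D:ℝ)/((M' - (t:ℕ) : ℕ):ℝ)) else 1) := by
    intro t
    by_cases h : (t:ℕ) < M'
    · rw [if_pos h]
      have h1 := hub t (by omega)
      have heq : (N - (t:ℕ) - D : ℕ) = M' - (t:ℕ) := by omega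
      rwa [heq] at h1
    · rw [if_neg h]
      exact hw1 (σ t)
  have hsum2 : ∑ t : Fin N, u t ≤ ∑ t ∈ Finset.range N, (if t < M' then
      1/(N:ℝ) + β * Real.sqrt ((D:ℝ)/((M' - t : ℕ):ℝ)) else 1) := by
    rw [← Fin.sum_univ_eq_sum_range (fun t => if t < M' then
      1/(N:ℝ) + β * Real.sqrt ((D:ℝ)/((M' - t : ℕ):ℝ)) else 1) N]
    exact Finset.sum_le_sum (fun t _ => hterm t)
  have hM'N : M' ≤ N := Nat.sub_le N D
  have hsplit : ∑ t ∈ Finset.range N, (if t < M' then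
      1/(N:ℝ) + β * Real.sqrt ((D:ℝ)/((M' - t : ℕ):ℝ)) else 1)
      = (∑ t ∈ Finset.range M', (1/(N:ℝ) + β * Real.sqrt ((D:ℝ)/((M' - t : ℕ):ℝ))))
        + ∑ _t ∈ Finset.Ico M' N, (1:ℝ) := by
    rw [Finset.range_eq_Ico, ← Finset.sum_Ico_consecutive _ (Nat.zero_le M') hM'N,
      ← Finset.range_eq_Ico]
    congr 1
    · apply Finset.sum_congr rfl
      intro t ht
      rw [if_pos (Finset.mem_range.mp ht)]
    · apply Finset.sum_congr rfl
      intro t ht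
      rw [if_neg (by simp only [Finset.mem_Ico] at ht; omega)]
  have hIco : ∑ _t ∈ Finset.Ico M' N, (1:ℝ) ≤ D := by
    rw [Finset.sum_const, Nat.card_Ico, nsmul_eq_mul, mul_one]
    have : N - M' ≤ D := by omega
    exact_mod_cast this
  have hfirst : ∑ t ∈ Finset.range M', (1/(N:ℝ) + β * Real.sqrt ((D:ℝ)/((M' - t : ℕ):ℝ)))
      ≤ 1 + 2 * β * Real.sqrt ((D:ℝ) * N) := by
    rw [Finset.sum_add_distrib]
    have ha : ∑ _t ∈ Finset.range M', (1/(N:ℝ)) ≤ 1 := by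
      rw [Finset.sum_const, nsmul_eq_mul]
      rw [Finset.card_range]
      rw [mul_one_div, div_le_one hNR]
      exact_mod_cast hM'N
    have hb : ∑ t ∈ Finset.range M', β * Real.sqrt ((D:ℝ)/((M' - t : ℕ):ℝ))
        ≤ 2 * β * Real.sqrt ((D:ℝ) * N) := by
      have hterm2 : ∀ t ∈ Finset.range M', β * Real.sqrt ((D:ℝ)/((M' - t : ℕ):ℝ))
          = β * Real.sqrt (D:ℝ) * (1 / Real.sqrt (((M' - t : ℕ):ℝ))) := by
        intro t _
        rw [Real.sqrt_div (by positivity)]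
        ring
      rw [Finset.sum_congr rfl hterm2, ← Finset.mul_sum]
      have hrefl : ∑ t ∈ Finset.range M', (1 / Real.sqrt (((M' - t : ℕ):ℝ)))
          = ∑ s ∈ Finset.range M', 1 / Real.sqrt ((s:ℝ) + 1) := by
        rw [← Finset.sum_range_reflect (fun s => 1 / Real.sqrt ((s:ℝ) + 1)) M']
        apply Finset.sum_congr rfl
        intro t ht
        have h1 : (M' - 1 - t) + 1 = M' - t := by
          have := Finset.mem_range.mp ht; omega
        congr 1
        rw [← h1]
        push_cast
        ring
      rw [hrefl]
      have hle := st4_sqrt_sum M'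
      have hM'sqrt : Real.sqrt (M' : ℝ) ≤ Real.sqrt (N : ℝ) := by
        apply Real.sqrt_le_sqrt
        exact_mod_cast hM'N
      calc β * Real.sqrt (D:ℝ) * ∑ s ∈ Finset.range M', 1 / Real.sqrt ((s:ℝ) + 1)
          ≤ β * Real.sqrt (D:ℝ) * (2 * Real.sqrt (M':ℝ)) := by
            apply mul_le_mul_of_nonneg_left hle (by positivity)
        _ ≤ β * Real.sqrt (D:ℝ) * (2 * Real.sqrt (N:ℝ)) := by
            apply mul_le_mul_of_nonneg_left (by linarith) (by positivity)
        _ = 2 * β * (Real.sqrt (D:ℝ) * Real.sqrt (N:ℝ)) := by ring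
        _ = 2 * β * Real.sqrt ((D:ℝ) * N) := by
            rw [← Real.sqrt_mul (by positivity)]
    linarith
  have : ∑ k : Fin N, bonus F β ((List.ofFn z).take (k:ℕ)) (z k) = ∑ k : Fin N, w k := rfl
  rw [this, hsum]
  calc ∑ t : Fin N, u t
      ≤ (∑ t ∈ Finset.range M', (1/(N:ℝ) + β * Real.sqrt ((D:ℝ)/((M' - t : ℕ):ℝ))))
        + ∑ _t ∈ Finset.Ico M' N, (1:ℝ) := by rw [← hsplit]; exact hsum2
    _ ≤ (1 + 2 * β * Real.sqrt ((D:ℝ) * N)) + D := add_le_add hfirst hIco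
    _ = 1 + (D:ℝ) + 2 * β * Real.sqrt ((D:ℝ) * N) := by ring
end

section
/- Let S and S' be finite sets, A a finite set, d ∈ ℕ, and let φ : S×A → ℝ^d and μ : S' → ℝ^d have all coordinates nonnegative. Suppose that P(s'|s,a) := ⟨φ(s,a), μ(s')⟩ satisfies Σ_{s'∈S'} P(s'|s,a) = 1 for every (s,a) ∈ S×A. Let μ̄ = Σ_{s'∈S'} μ(s') ∈ ℝ^d, define ψ(s,a) ∈ ℝ^d by ψ(s,a)[x] = φ(s,a)[x]·μ̄[x] for x ∈ {1,…,d}, and for each x with μ̄[x] > 0 define ν(x) ∈ ℝ^{S'} by ν(x)[s'] = μ(s')[x]/μ̄[x]. Then: (i) ⟨φ(s,a), μ̄⟩ = 1 for every (s,a), so ψ(s,a) is a probability vector on {1,…,d}; (ii) ν(x) is a probability vector on S' for every x with μ̄[x] > 0; and (iii) Σ_{x : μ̄[x]>0} ψ(s,a)[x]·ν(x)[s'] = P(s'|s,a) for all (s,a) ∈ S×A and s' ∈ S'. In other words, any linear transition model with nonnegative features admits a latent-variable (soft state aggregation) representation with d latent states. -/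
open scoped Classical

/-- any linear transition model `P(s'|s,a) = ⟨φ(s,a), μ(s')⟩` with nonnegative
features admits a latent-variable (soft state aggregation) representation with `d` latent
states: (i) `⟨φ(s,a), μ̄⟩ = 1` and `ψ(s,a)` is a probability vector on `{1,…,d}`;
(ii) `ν(x)` is a probability vector on `S'` whenever `μ̄[x] > 0`; and
(iii) `Σ_{x : μ̄[x]>0} ψ(s,a)[x]·ν(x)[s'] = P(s'|s,a)`. -/
theorem stmt6 (S A S' : Type*) [Fintype S] [Fintype A] [Fintype S'] (d : ℕ)
    (φ : S × A → Fin d → ℝ) (μ : S' → Fin d → ℝ)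
    (hφ : ∀ sa x, 0 ≤ φ sa x) (hμ : ∀ s' x, 0 ≤ μ s' x)
    (P : S × A → S' → ℝ) (hP : P = fun sa s' => ∑ x, φ sa x * μ s' x)
    (hsum : ∀ sa : S × A, ∑ s' : S', P sa s' = 1)
    (μbar : Fin d → ℝ) (hμbar : μbar = fun x => ∑ s' : S', μ s' x)
    (ψ : S × A → Fin d → ℝ) (hψ : ψ = fun sa x => φ sa x * μbar x)
    (ν : Fin d → S' → ℝ) (hν : ν = fun x s' => μ s' x / μbar x) :
    (∀ sa : S × A,
        (∑ x, φ sa x * μbar x) = 1 ∧ (∀ x, 0 ≤ ψ sa x) ∧ (∑ x, ψ sa x) = 1)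
    ∧ (∀ x : Fin d, 0 < μbar x → (∀ s', 0 ≤ ν x s') ∧ (∑ s', ν x s') = 1)
    ∧ (∀ (sa : S × A) (s' : S'),
        (∑ x ∈ Finset.univ.filter fun x => 0 < μbar x, ψ sa x * ν x s') = P sa s') := by
  subst hP hμbar hψ hν
  have hμb : ∀ x, (0:ℝ) ≤ ∑ s' : S', μ s' x := fun x =>
    Finset.sum_nonneg fun s' _ => hμ s' x
  have key : ∀ sa : S × A, (∑ x, φ sa x * ∑ s' : S', μ s' x) = 1 := by
    intro sa
    have := hsum sa
    rw [Finset.sum_comm] at this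
    simpa [Finset.mul_sum] using this
  refine ⟨fun sa => ⟨key sa, fun x => mul_nonneg (hφ sa x) (hμb x), key sa⟩,
    fun x hx => ⟨fun s' => div_nonneg (hμ s' x) (le_of_lt hx), by
      rw [← Finset.sum_div, div_self (ne_of_gt hx)]⟩,
    fun sa s' => ?_⟩
  beta_reduce
  rw [← Finset.sum_filter_add_sum_filter_not Finset.univ (fun x => 0 < ∑ s' : S', μ s' x)
    (fun x => φ sa x * μ s' x)]
  have h2 : ∀ x ∈ Finset.univ.filter (fun x => ¬ 0 < ∑ s' : S', μ s' x),
      φ sa x * μ s' x = 0 := by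
    intro x hx
    simp only [Finset.mem_filter] at hx
    have hz : (∑ t : S', μ t x) = 0 := le_antisymm (not_lt.mp hx.2) (hμb x)
    have : μ s' x = 0 :=
      (Finset.sum_eq_zero_iff_of_nonneg (fun t _ => hμ t x)).mp hz s' (Finset.mem_univ s')
    simp [this]
  rw [Finset.sum_eq_zero h2, add_zero]
  refine Finset.sum_congr rfl fun x hx => ?_
  simp only [Finset.mem_filter] at hx
  have hne : (∑ t : S', μ t x) ≠ 0 := ne_of_gt hx.2
  field_simp
end

section
/- There is an absolute constant C > 0 such that the following holds. Let (F_k)_{k=0}^K be a filtration on a probability space, let X₁,…,X_K be {0,1}-valued random variables with X_k measurable with respect to F_k, and suppose E[X_k | F_{k−1}] ≤ 1/K almost surely for every k ∈ {1,…,K}. Then for any δ ∈ (0,1), with probability at least 1 − δ, Σ_{k=1}^K X_k ≤ C·(1 + log(1/δ)). -/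
open MeasureTheory ProbabilityTheory

/-- there is an absolute constant `C > 0` such that for any filtration
`(F_k)_{k=0}^K` and `{0,1}`-valued random variables `X_k`, measurable w.r.t. `F_k`, with
`E[X_k | F_{k−1}] ≤ 1/K` almost surely, for any `δ ∈ (0,1)`, with probability at least
`1 − δ`, `Σ_{k=1}^K X_k ≤ C·(1 + log(1/δ))`. -/
theorem stmt9 :
    ∃ C : ℝ, 0 < C ∧
      ∀ (Ω : Type*) (m0 : MeasurableSpace Ω) (μ : Measure Ω), IsProbabilityMeasure μ →
      ∀ (K : ℕ) (ℱ : Filtration ℕ m0) (X : ℕ → Ω → ℝ),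
        (∀ k ∈ Finset.Icc 1 K, ∀ ω, X k ω = 0 ∨ X k ω = 1) →
        (∀ k ∈ Finset.Icc 1 K, Measurable[ℱ k] (X k)) →
        (∀ k ∈ Finset.Icc 1 K, ∀ᵐ ω ∂μ, (μ[X k | ℱ (k - 1)]) ω ≤ 1 / K) →
        ∀ δ : ℝ, δ ∈ Set.Ioo (0 : ℝ) 1 →
        ENNReal.ofReal (1 - δ) ≤
          μ {ω | ∑ k ∈ Finset.Icc 1 K, X k ω ≤ C * (1 + Real.log (1 / δ))} := by
  refine ⟨3, by norm_num, ?_⟩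
  intro Ω m0 μ hμ K ℱ X hval hmeas hcond δ hδ
  obtain ⟨hδ0, hδ1⟩ := hδ
  have he1 : (2.7182818283 : ℝ) < Real.exp 1 := Real.exp_one_gt_d9
  have he2 : Real.exp 1 < 2.7182818286 := Real.exp_one_lt_d9
  set c : ℝ := Real.exp 1 - 1 with hc
  have hc0 : 0 ≤ c := by rw [hc]; nlinarith
  have hc2 : c ≤ 2 := by rw [hc]; nlinarith
  -- pointwise facts
  have hX01 : ∀ k ∈ Finset.Icc 1 K, ∀ ω, 0 ≤ X k ω ∧ X k ω ≤ 1 := by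
    intro k hk ω; rcases hval k hk ω with h | h <;> rw [h] <;> norm_num
  have hfac : ∀ k ∈ Finset.Icc 1 K, ∀ ω, 1 + c * X k ω = Real.exp (X k ω) := by
    intro k hk ω
    rcases hval k hk ω with h | h <;> rw [h]
    · simp
    · rw [hc]; ring
  have hXm : ∀ k ∈ Finset.Icc 1 K, Measurable (X k) :=
    fun k hk => (hmeas k hk).mono (ℱ.le k) le_rfl
  -- the exponential product
  set P : ℕ → Ω → ℝ := fun n ω => ∏ k ∈ Finset.Icc 1 n, (1 + c * X k ω) with hP
  have hPnonneg : ∀ n, n ≤ K → ∀ ω, 0 ≤ P n ω := by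
    intro n hn ω
    refine Finset.prod_nonneg fun k hk => ?_
    have hk' : k ∈ Finset.Icc 1 K := Finset.mem_Icc.mpr
      ⟨(Finset.mem_Icc.mp hk).1, le_trans (Finset.mem_Icc.mp hk).2 hn⟩
    have := (hX01 k hk' ω).1
    positivity
  have hPle : ∀ n, n ≤ K → ∀ ω, P n ω ≤ Real.exp 1 ^ n := by
    intro n hn ω
    have h : P n ω ≤ ∏ _k ∈ Finset.Icc 1 n, Real.exp 1 := by
      refine Finset.prod_le_prod (fun k hk => ?_) (fun k hk => ?_) <;>
        · have hk' : k ∈ Finset.Icc 1 K := Finset.mem_Icc.mpr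
            ⟨(Finset.mem_Icc.mp hk).1, le_trans (Finset.mem_Icc.mp hk).2 hn⟩
          first
          | · have := (hX01 k hk' ω).1
              positivity
          | · rw [hfac k hk' ω]
              exact Real.exp_le_exp.mpr (hX01 k hk' ω).2
    calc P n ω ≤ ∏ _k ∈ Finset.Icc 1 n, Real.exp 1 := h
      _ = Real.exp 1 ^ n := by rw [Finset.prod_const, Nat.card_Icc]; norm_num
  have hPmeas : ∀ n, n ≤ K → Measurable (P n) := by
    intro n hn
    refine Finset.measurable_prod _ fun k hk => ?_
    have hk' : k ∈ Finset.Icc 1 K := Finset.mem_Icc.mpr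
      ⟨(Finset.mem_Icc.mp hk).1, le_trans (Finset.mem_Icc.mp hk).2 hn⟩
    exact measurable_const.add ((hXm k hk').const_mul c)
  have hPint : ∀ n, n ≤ K → Integrable (P n) μ := by
    intro n hn
    refine Integrable.mono' (integrable_const (Real.exp 1 ^ n))
      ((hPmeas n hn).aestronglyMeasurable) ?_
    refine Filter.Eventually.of_forall fun ω => ?_
    rw [Real.norm_eq_abs, abs_of_nonneg (hPnonneg n hn ω)]
    exact hPle n hn ω
  have hPsm : ∀ n, n ≤ K → StronglyMeasurable[ℱ n] (P n) := by
    intro n hn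
    have h : Measurable[ℱ n] (P n) := by
      refine Finset.measurable_prod _ fun k hk => ?_
      have hk2 := Finset.mem_Icc.mp hk
      have hk' : k ∈ Finset.Icc 1 K := Finset.mem_Icc.mpr ⟨hk2.1, le_trans hk2.2 hn⟩
      have hXk : Measurable[ℱ n] (X k) := (hmeas k hk').mono (ℱ.mono hk2.2) le_rfl
      exact measurable_const.add (hXk.const_mul c)
    exact h.stronglyMeasurable
  -- main supermartingale bound by induction
  have key : ∀ n, n ≤ K → ∫ ω, P n ω ∂μ ≤ (1 + c / K) ^ n := by
    intro n
    induction n with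
    | zero =>
      intro _
      have h1 : P 0 = fun _ => (1:ℝ) := by
        funext ω
        rw [hP]
        simp
      rw [h1]
      simp
    | succ n ih =>
      intro hn1
      have hn : n ≤ K := le_trans (Nat.le_succ n) hn1
      have hK1 : (n+1) ∈ Finset.Icc 1 K :=
        Finset.mem_Icc.mpr ⟨Nat.succ_le_succ (Nat.zero_le n), hn1⟩
      set g : Ω → ℝ := fun ω => 1 + c * X (n+1) ω with hg
      have hgint : Integrable g μ := by
        refine Integrable.mono' (integrable_const (1 + c))
          ((measurable_const.add ((hXm _ hK1).const_mul c)).aestronglyMeasurable) ?_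
        refine Filter.Eventually.of_forall fun ω => ?_
        show ‖1 + c * X (n+1) ω‖ ≤ 1 + c
        rw [Real.norm_eq_abs, abs_of_nonneg (by nlinarith [(hX01 _ hK1 ω).1])]
        nlinarith [(hX01 _ hK1 ω).2, (hX01 _ hK1 ω).1]
      have hXint : Integrable (X (n+1)) μ := by
        refine Integrable.mono' (integrable_const 1) ((hXm _ hK1).aestronglyMeasurable) ?_
        refine Filter.Eventually.of_forall fun ω => ?_
        rw [Real.norm_eq_abs, abs_of_nonneg (hX01 _ hK1 ω).1]
        exact (hX01 _ hK1 ω).2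
      have hsplit : P (n+1) = P n * g := by
        funext ω
        simpa [hP, hg] using
          Finset.prod_Icc_succ_top (Nat.succ_le_succ (Nat.zero_le n))
            (fun k => 1 + c * X k ω)
      have hPg_int : Integrable (P n * g) μ := by rw [← hsplit]; exact hPint _ hn1
      have h1 : μ[P n * g | ℱ n] =ᵐ[μ] P n * μ[g | ℱ n] :=
        condExp_mul_of_stronglyMeasurable_left (hPsm n hn) hPg_int hgint
      have h2 : μ[g | ℱ n] =ᵐ[μ] fun ω => 1 + c * (μ[X (n+1) | ℱ n]) ω := by
        have hd : g = (fun _ : Ω => (1:ℝ)) + c • X (n+1) := by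
          funext ω
          simp [hg, Pi.add_apply, Pi.smul_apply, smul_eq_mul]
        rw [hd]
        filter_upwards [condExp_add (μ := μ) (m := ℱ n) (integrable_const (1:ℝ))
            (hXint.smul c),
          condExp_smul (μ := μ) (m := ℱ n) c (X (n+1))] with ω hω1 hω2
        rw [hω1, Pi.add_apply, condExp_const (ℱ.le n), hω2, Pi.smul_apply, smul_eq_mul]
      have hb : ∀ᵐ ω ∂μ, (μ[P n * g | ℱ n]) ω ≤ (1 + c / K) * P n ω := by
        have hcK := hcond (n+1) hK1
        rw [Nat.add_sub_cancel] at hcK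
        filter_upwards [h1, h2, hcK] with ω hω1 hω2 hω3
        rw [hω1, Pi.mul_apply, hω2]
        have h0 : 0 ≤ P n ω := hPnonneg n hn ω
        have hbd : 1 + c * (μ[X (n+1)|ℱ n]) ω ≤ 1 + c / K := by
          have h4 := mul_le_mul_of_nonneg_left hω3 hc0
          have h5 : c * (1 / K) = c / K := by ring
          nlinarith
        nlinarith
      calc ∫ ω, P (n+1) ω ∂μ = ∫ ω, (μ[P n * g | ℱ n]) ω ∂μ := by
            rw [hsplit, integral_condExp (ℱ.le n)]
        _ ≤ ∫ ω, (1 + c / K) * P n ω ∂μ :=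
            integral_mono_ae integrable_condExp ((hPint n hn).const_mul _) hb
        _ = (1 + c / K) * ∫ ω, P n ω ∂μ := integral_const_mul _ _
        _ ≤ (1 + c / K) * (1 + c / K) ^ n := by
            refine mul_le_mul_of_nonneg_left (ih hn) (by positivity)
        _ = (1 + c / K) ^ (n+1) := by ring
  -- integral of P K is at most exp 2
  have hintPK : ∫ ω, P K ω ∂μ ≤ Real.exp 2 := by
    refine le_trans (key K le_rfl) ?_
    rcases Nat.eq_zero_or_pos K with hK0 | hKpos
    · subst hK0
      simpa using Real.one_le_exp (by norm_num : (0:ℝ) ≤ 2)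
    · have hKne : (K:ℝ) ≠ 0 := Nat.cast_ne_zero.mpr hKpos.ne'
      have h1 : (1 + c/K) ≤ Real.exp (c/K) := by
        have := Real.add_one_le_exp (c/K)
        linarith
      have h2 : (1 + c/K)^K ≤ Real.exp (c/K) ^ K := pow_le_pow_left₀ (by positivity) h1 K
      have h3 : Real.exp (c/K) ^ K = Real.exp c := by
        rw [← Real.exp_nat_mul]
        congr 1
        field_simp
      calc (1 + c/K)^K ≤ Real.exp c := h2.trans_eq h3
        _ ≤ Real.exp 2 := Real.exp_le_exp.mpr hc2
  -- Markov / Chernoff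
  set L := Real.log (1/δ) with hLdef
  have hL : 0 < L := Real.log_pos (one_lt_one_div hδ0 hδ1)
  set a := 3 * (1 + L) with ha
  have hS : ∀ ω, P K ω = Real.exp (∑ k ∈ Finset.Icc 1 K, X k ω) := by
    intro ω
    rw [Real.exp_sum]
    exact Finset.prod_congr rfl fun k hk => hfac k hk ω
  have hmark := mul_meas_ge_le_integral_of_nonneg
    (Filter.Eventually.of_forall (hPnonneg K le_rfl)) (hPint K le_rfl) (Real.exp a)
  have hBR : (μ {ω | Real.exp a ≤ P K ω}).toReal ≤ δ := by
    have hEa : 0 < Real.exp a := Real.exp_pos a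
    have h1 : (μ {ω | Real.exp a ≤ P K ω}).toReal ≤ Real.exp 2 / Real.exp a := by
      rw [le_div_iff₀ hEa, mul_comm]
      exact hmark.trans hintPK
    refine h1.trans ?_
    rw [← Real.exp_sub]
    have hδexp : δ = Real.exp (Real.log δ) := (Real.exp_log hδ0).symm
    rw [hδexp]
    apply Real.exp_le_exp.mpr
    have hlog : Real.log δ = -L := by rw [hLdef, one_div, Real.log_inv]; ring
    rw [hlog, ha]
    linarith
  have hsum : Measurable fun ω => ∑ k ∈ Finset.Icc 1 K, X k ω :=
    Finset.measurable_sum _ fun k hk => hXm k hk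
  have hBset : MeasurableSet {ω | a < ∑ k ∈ Finset.Icc 1 K, X k ω} :=
    measurableSet_lt measurable_const hsum
  have hB2 : μ {ω | a < ∑ k ∈ Finset.Icc 1 K, X k ω} ≤ ENNReal.ofReal δ := by
    have hsub : {ω | a < ∑ k ∈ Finset.Icc 1 K, X k ω} ⊆ {ω | Real.exp a ≤ P K ω} := by
      intro ω hω
      show Real.exp a ≤ P K ω
      rw [hS ω]
      exact Real.exp_le_exp.mpr (le_of_lt hω)
    refine le_trans (measure_mono hsub) ?_
    rw [← ENNReal.ofReal_toReal (measure_ne_top μ {ω | Real.exp a ≤ P K ω})]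
    exact ENNReal.ofReal_le_ofReal hBR
  have hcompl : {ω | ∑ k ∈ Finset.Icc 1 K, X k ω ≤ 3 * (1 + L)}
      = {ω | a < ∑ k ∈ Finset.Icc 1 K, X k ω}ᶜ := by
    ext ω
    simp [ha, not_lt]
  rw [hcompl, prob_compl_eq_one_sub hBset]
  have hofr : ENNReal.ofReal (1 - δ) = 1 - ENNReal.ofReal δ := by
    rw [ENNReal.ofReal_sub _ (le_of_lt hδ0), ENNReal.ofReal_one]
  rw [hofr]
  exact tsub_le_tsub_left hB2 1
end

section
/- Let (D, μ) be a probability space, R a finite set of measurable functions D → {0,1}, r* ∈ R, and let Z₁,…,Z_K be i.i.d. samples from μ. Then for any δ ∈ (0,1), with probability at least 1 − δ, simultaneously for every m ∈ {1,…,K} and every r ∈ R satisfying r(Z_i) = r*(Z_i) for all i ∈ {1,…,m}, it holds that μ({z ∈ D : r(z) ≠ r*(z)}) ≤ (log|R| + log(K/δ))/m. -/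
open MeasureTheory ProbabilityTheory

set_option maxHeartbeats 1000000 in
/-- for a finite hypothesis class `R` of `{0,1}`-valued functions containing
the target `r*`, and i.i.d. samples `Z₁,…,Z_K ~ μ_D`, with probability at least `1 − δ`,
every `r ∈ R` consistent with the first `m` samples has population risk at most
`(log|R| + log(K/δ))/m`, simultaneously for all `m ∈ {1,…,K}`. -/
theorem stmt10 (D : Type*) [MeasurableSpace D] (μD : Measure D) [IsProbabilityMeasure μD]
    (R : Finset (D → ℝ)) (hR01 : ∀ r ∈ R, ∀ z, r z = 0 ∨ r z = 1)
    (hRmeas : ∀ r ∈ R, Measurable r)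
    (rstar : D → ℝ) (hrstar : rstar ∈ R)
    (Ω : Type*) [MeasurableSpace Ω] (μ : Measure Ω) [IsProbabilityMeasure μ]
    (K : ℕ) (Z : Fin K → Ω → D) (hZmeas : ∀ i, Measurable (Z i))
    (hindep : iIndepFun Z μ)
    (hlaw : ∀ i, μ.map (Z i) = μD)
    (δ : ℝ) (hδ : δ ∈ Set.Ioo (0 : ℝ) 1) :
    ENNReal.ofReal (1 - δ) ≤
      μ {ω | ∀ m ∈ Finset.Icc 1 K, ∀ r ∈ R,
        (∀ i : Fin K, (i : ℕ) < m → r (Z i ω) = rstar (Z i ω)) →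
        μD {z | r z ≠ rstar z} ≤
          ENNReal.ofReal ((Real.log R.card + Real.log (K / δ)) / m)} := by
  obtain ⟨hδ0, hδ1⟩ := hδ
  rcases Nat.eq_zero_or_pos K with hK0 | hK
  · have hset : {ω | ∀ m ∈ Finset.Icc 1 K, ∀ r ∈ R,
        (∀ i : Fin K, (i : ℕ) < m → r (Z i ω) = rstar (Z i ω)) →
        μD {z | r z ≠ rstar z} ≤
          ENNReal.ofReal ((Real.log R.card + Real.log (K / δ)) / m)} = Set.univ := by
      apply Set.eq_univ_of_forall
      intro ω
      simp only [Set.mem_setOf_eq]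
      intro m hm
      exact absurd (Finset.mem_Icc.mp hm) (by omega)
    rw [hset, measure_univ]
    exact ENNReal.ofReal_le_one.mpr (by linarith)
  have hK1 : (1:ℝ) ≤ K := by exact_mod_cast hK
  have hRcard : (1:ℝ) ≤ R.card := by exact_mod_cast Finset.card_pos.mpr ⟨rstar, hrstar⟩
  have hKδ : (1:ℝ) < K / δ := (one_lt_div hδ0).mpr (lt_of_lt_of_le hδ1 hK1)
  set L : ℝ := Real.log R.card + Real.log (K / δ) with hLdef
  have hLpos : 0 < L := by
    have h1 := Real.log_nonneg hRcard
    have h2 := Real.log_pos hKδ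
    simp only [hLdef]; linarith
  set c : ℝ := δ / (K * R.card) with hcdef
  have hKR : (0:ℝ) < K * R.card := by positivity
  have hcpos : 0 < c := div_pos hδ0 hKR
  set S : (D → ℝ) → Set D := fun r => {z | r z = rstar z} with hSdef
  have hSmeas : ∀ r ∈ R, MeasurableSet (S r) := fun r hr =>
    measurableSet_eq_fun (hRmeas r hr) (hRmeas rstar hrstar)
  set B : ℕ → (D → ℝ) → Set Ω := fun m r =>
    ⋂ i ∈ Finset.univ.filter (fun i : Fin K => (i:ℕ) < m), Z i ⁻¹' S r with hBdef
  -- measure of B m r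
  have hBmeas : ∀ m, m ∈ Finset.Icc 1 K → ∀ r ∈ R, μ (B m r) = μD (S r) ^ m := by
    intro m hm r hr
    obtain ⟨hm1, hmK⟩ := Finset.mem_Icc.mp hm
    have hfilter : (Finset.univ.filter fun i : Fin K => (i:ℕ) < m) =
        Finset.map (Fin.castLEEmb hmK) Finset.univ := by
      ext i
      simp only [Finset.mem_filter, Finset.mem_univ, true_and, Finset.mem_map,
        Fin.castLEEmb_apply]
      constructor
      · intro h; exact ⟨⟨(i:ℕ), h⟩, by ext; simp⟩
      · rintro ⟨j, rfl⟩; simpa using j.isLt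
    have hkey := hindep.meas_biInter
      (S := Finset.univ.filter fun i : Fin K => (i:ℕ) < m)
      (s := fun i => Z i ⁻¹' S r) (fun i _ => ⟨S r, hSmeas r hr, rfl⟩)
    have hone : ∀ i : Fin K, μ (Z i ⁻¹' S r) = μD (S r) := fun i => by
      rw [← hlaw i, Measure.map_apply (hZmeas i) (hSmeas r hr)]
    rw [hBdef]
    simp only
    rw [hkey, Finset.prod_congr rfl (fun i _ => hone i), Finset.prod_const, hfilter,
      Finset.card_map, Finset.card_univ, Fintype.card_fin]
  -- per-term probability bound
  have hterm : ∀ m, m ∈ Finset.Icc 1 K → ∀ r ∈ R,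
      ENNReal.ofReal (L / m) < μD {z | r z ≠ rstar z} →
      μ (B m r) ≤ ENNReal.ofReal c := by
    intro m hm r hr hbad
    obtain ⟨hm1, hmK⟩ := Finset.mem_Icc.mp hm
    have hmpos : (0:ℝ) < m := by exact_mod_cast hm1
    have hεpos : 0 < L / m := div_pos hLpos hmpos
    have hcompl : {z | r z ≠ rstar z} = (S r)ᶜ := by
      ext z; simp [hSdef]
    have hfin : μD (S r)ᶜ ≠ ⊤ := measure_ne_top _ _
    set e : ℝ := (μD (S r)ᶜ).toReal with hedef
    have he : L / m < e := by
      rw [hcompl] at hbad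
      exact (ENNReal.ofReal_lt_iff_lt_toReal hεpos.le hfin).mp hbad
    have hq : μD (S r) = ENNReal.ofReal (1 - e) := by
      have := measure_compl (hSmeas r hr) (measure_ne_top μD _)
      have hq1 : μD (S r) ≤ 1 := prob_le_one (μ := μD)
      have : μD (S r) = 1 - μD (S r)ᶜ := by
        rw [this, measure_univ]
        rw [ENNReal.sub_sub_cancel ENNReal.one_ne_top hq1]
      rw [this, hedef, ← ENNReal.ofReal_one, ← ENNReal.ofReal_toReal hfin,
        ← ENNReal.ofReal_sub _ ENNReal.toReal_nonneg]
      simp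
    rw [hBmeas m hm r hr, hq, ← ENNReal.ofReal_pow (by
      have : e ≤ 1 := by
        rw [hedef]
        exact ENNReal.toReal_le_of_le_ofReal one_pos.le (by simpa using prob_le_one)
      linarith)]
    apply ENNReal.ofReal_le_ofReal
    have h1 : (1 - e) ^ m ≤ Real.exp (-e) ^ m := by
      apply pow_le_pow_left₀
      · have : e ≤ 1 := by
          rw [hedef]
          exact ENNReal.toReal_le_of_le_ofReal one_pos.le (by simpa using prob_le_one)
        linarith
      · have := Real.add_one_le_exp (-e); linarith
    have h2 : Real.exp (-e) ^ m = Real.exp (-(e * m)) := by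
      rw [← Real.exp_nat_mul]; ring_nf
    have h3 : Real.exp (-(e * m)) ≤ Real.exp (-L) := by
      apply Real.exp_le_exp.mpr
      have : L ≤ e * m := by
        have := (div_le_iff₀ hmpos).mp he.le
        linarith
      linarith
    have h4 : Real.exp (-L) = c := by
      rw [hLdef, ← Real.log_mul (by positivity) (by positivity), Real.exp_neg,
        Real.exp_log (by positivity), hcdef,
        show (R.card:ℝ) * ((K:ℝ)/δ) = ((K:ℝ) * R.card)/δ by ring, inv_div]
    calc (1 - e) ^ m ≤ Real.exp (-e) ^ m := h1
      _ = Real.exp (-(e * m)) := h2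
      _ ≤ Real.exp (-L) := h3
      _ = c := h4
  -- the bad-event cover
  set T : ℕ → (D → ℝ) → Set Ω := fun m r =>
    if ENNReal.ofReal (L / m) < μD {z | r z ≠ rstar z} then B m r else ∅ with hTdef
  have hTle : ∀ m, m ∈ Finset.Icc 1 K → ∀ r ∈ R, μ (T m r) ≤ ENNReal.ofReal c := by
    intro m hm r hr
    rw [hTdef]
    simp only
    split_ifs with h
    · exact hterm m hm r hr h
    · simp
  set G : Set Ω := {ω | ∀ m ∈ Finset.Icc 1 K, ∀ r ∈ R,
        (∀ i : Fin K, (i : ℕ) < m → r (Z i ω) = rstar (Z i ω)) →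
        μD {z | r z ≠ rstar z} ≤ ENNReal.ofReal (L / m)} with hGdef
  have hGc : Gᶜ ⊆ ⋃ m ∈ Finset.Icc 1 K, ⋃ r ∈ R, T m r := by
    intro ω hω
    simp only [hGdef, Set.mem_compl_iff, Set.mem_setOf_eq, not_forall] at hω
    obtain ⟨m, hm, r, hr, hcons, hbad⟩ := hω
    have hbad' : ENNReal.ofReal (L / m) < μD {z | r z ≠ rstar z} := not_le.mp hbad
    refine Set.mem_biUnion hm (Set.mem_biUnion hr ?_)
    rw [hTdef]
    simp only [if_pos hbad']
    rw [hBdef]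
    simp only [Set.mem_iInter, Finset.mem_filter, Finset.mem_univ, true_and,
      Set.mem_preimage]
    exact fun i hi => hcons i hi
  have hGcle : μ Gᶜ ≤ ENNReal.ofReal δ := by
    calc μ Gᶜ ≤ ∑ m ∈ Finset.Icc 1 K, μ (⋃ r ∈ R, T m r) :=
          le_trans (measure_mono hGc) (measure_biUnion_finset_le _ _)
      _ ≤ ∑ m ∈ Finset.Icc 1 K, ∑ r ∈ R, μ (T m r) :=
          Finset.sum_le_sum fun m _ => measure_biUnion_finset_le _ _
      _ ≤ ∑ m ∈ Finset.Icc 1 K, ∑ r ∈ R, ENNReal.ofReal c :=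
          Finset.sum_le_sum fun m hm => Finset.sum_le_sum fun r hr => hTle m hm r hr
      _ = (Finset.Icc 1 K).card • R.card • ENNReal.ofReal c := by
          rw [Finset.sum_congr rfl fun m _ => Finset.sum_const (ENNReal.ofReal c),
            Finset.sum_const]
      _ = (K * R.card : ℕ) * ENNReal.ofReal c := by
          rw [Nat.card_Icc, smul_smul, nsmul_eq_mul]
          norm_num
      _ = ENNReal.ofReal δ := by
          rw [← ENNReal.ofReal_natCast, ← ENNReal.ofReal_mul (by positivity), hcdef]
          congr 1
          push_cast
          rw [mul_comm, div_mul_cancel₀ _ (ne_of_gt hKR)]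
  have hsub : (1:ENNReal) ≤ μ G + ENNReal.ofReal δ := by
    calc (1:ENNReal) = μ (G ∪ Gᶜ) := by rw [Set.union_compl_self, measure_univ]
      _ ≤ μ G + μ Gᶜ := measure_union_le _ _
      _ ≤ μ G + ENNReal.ofReal δ := add_le_add_right hGcle _
  have : ENNReal.ofReal (1 - δ) = 1 - ENNReal.ofReal δ := by
    rw [ENNReal.ofReal_sub _ hδ0.le, ENNReal.ofReal_one]
  rw [this]
  exact tsub_le_iff_right.mpr hsub
end

section
/- Consider a finite-horizon tabular MDP with horizon H and transition kernels P_h, and let r̂ = (r̂_h)_{h∈[H]} be any reward function with values in [0,1]. Let Γ_h : S×A → [0,∞) and g_h : S×A → ℝ for h ∈ [H], and define backward recursively V̂_{H+1} ≡ 0, Q̂_h(s,a) = min{ max{ r̂_h(s,a) + g_h(s,a) + Γ_h(s,a), 0 }, H−h+1 }, and V̂_h(s) = max_{a∈A} Q̂_h(s,a). If |g_h(s,a) − (P_h V̂_{h+1})(s,a)| ≤ Γ_h(s,a) for all h ∈ [H] and (s,a) ∈ S×A, then for all h ∈ [H], s ∈ S, a ∈ A: Q̂_h(s,a) ≥ Q_h^*(s,a,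 r̂) and V̂_h(s) ≥ V_h^*(s, r̂). -/
variable {S A : Type*}

/-- `Vpol P π r n h s` is the value `V_h^π(s, r)` of policy `π` with `n` remaining stages
`h, …, h+n−1`; with `n = H − h + 1` (1-based stages) this is the finite-horizon value. -/
noncomputable def Vpol [Fintype S] (P : ℕ → S → A → S → ℝ) (π : ℕ → S → A)
    (r : ℕ → S → A → ℝ) : ℕ → ℕ → S → ℝ
  | 0, _, _ => 0
  | n + 1, h, s => r h s (π h s) + ∑ s', P h s (π h s) s' * Vpol P π r n (h + 1) s'

/-- `Q_h^π(s, a, r)` for horizon `H` (1-based stages). -/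
noncomputable def Qpol [Fintype S] (P : ℕ → S → A → S → ℝ) (π : ℕ → S → A)
    (r : ℕ → S → A → ℝ) (H h : ℕ) (s : S) (a : A) : ℝ :=
  r h s a + ∑ s', P h s a s' * Vpol P π r (H - h) (h + 1) s'

/-- Optimal Q-value `Q_h^*(s, a, r) = max_π Q_h^π(s, a, r)`. -/
noncomputable def Qstar [Fintype S] (P : ℕ → S → A → S → ℝ) (r : ℕ → S → A → ℝ)
    (H h : ℕ) (s : S) (a : A) : ℝ :=
  ⨆ π : ℕ → S → A, Qpol P π r H h s a

/-- Optimal value `V_h^*(s, r) = max_π V_h^π(s, r)`. -/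
noncomputable def Vstar [Fintype S] (P : ℕ → S → A → S → ℝ) (r : ℕ → S → A → ℝ)
    (H h : ℕ) (s : S) : ℝ :=
  ⨆ π : ℕ → S → A, Vpol P π r (H + 1 - h) h s

/-- The optimistic Q-function `Q̂_h(s,a) = min{max{r̂_h(s,a) + g_h(s,a) + Γ_h(s,a), 0}, H−h+1}`. -/
noncomputable def Qhat (rhat g Γ : ℕ → S → A → ℝ) (H h : ℕ) (s : S) (a : A) : ℝ :=
  min (max (rhat h s a + g h s a + Γ h s a) 0) ((H - h + 1 : ℕ) : ℝ)

/-- `V̂_h(s) = max_{a∈A} Q̂_h(s,a)` for `h ∈ [H]`, and `V̂_{H+1} ≡ 0`. -/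
noncomputable def Vhat (rhat g Γ : ℕ → S → A → ℝ) (H h : ℕ) (s : S) : ℝ :=
  if h ≤ H then ⨆ a : A, Qhat rhat g Γ H h s a else 0


lemma Vhat_le_cast [Fintype A] [Nonempty A] (rhat g Γ : ℕ → S → A → ℝ) (H h : ℕ) (s : S) :
    Vhat rhat g Γ H h s ≤ ((H + 1 - h : ℕ) : ℝ) := by
  unfold Vhat
  split
  · rename_i hh
    refine ciSup_le fun a => (min_le_right _ _).trans (le_of_eq ?_)
    congr 1
    omega
  · positivity

lemma lemA [Fintype S] [Fintype A] [Nonempty A]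
    (H : ℕ) (P : ℕ → S → A → S → ℝ)
    (hP0 : ∀ h s a s', 0 ≤ P h s a s') (hP1 : ∀ h s a, ∑ s', P h s a s' = 1)
    (rhat : ℕ → S → A → ℝ) (hrhat : ∀ h s a, rhat h s a ∈ Set.Icc (0 : ℝ) 1)
    (Γ : ℕ → S → A → ℝ) (g : ℕ → S → A → ℝ)
    (hg : ∀ h ∈ Finset.Icc 1 H, ∀ (s : S) (a : A),
      |g h s a - ∑ s', P h s a s' * Vhat rhat g Γ H (h + 1) s'| ≤ Γ h s a)
    (h : ℕ) (h1 : 1 ≤ h) (hH : h ≤ H) (s : S) (a : A) :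
    rhat h s a + ∑ s', P h s a s' * Vhat rhat g Γ H (h + 1) s'
      ≤ Qhat rhat g Γ H h s a := by
  have hb := abs_le.mp (hg h (Finset.mem_Icc.mpr ⟨h1, hH⟩) s a)
  refine le_min (le_trans (by linarith [hb.1]) (le_max_left _ _)) ?_
  have hV : ∀ s', Vhat rhat g Γ H (h + 1) s' ≤ ((H - h : ℕ) : ℝ) := by
    intro s'
    have := Vhat_le_cast rhat g Γ H (h + 1) s'
    have he : H + 1 - (h + 1) = H - h := by omega
    rwa [he] at this
  have hsum : ∑ s', P h s a s' * Vhat rhat g Γ H (h + 1) s' ≤ ((H - h : ℕ) : ℝ) :=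
    calc ∑ s', P h s a s' * Vhat rhat g Γ H (h + 1) s'
        ≤ ∑ s', P h s a s' * ((H - h : ℕ) : ℝ) :=
          Finset.sum_le_sum fun s' _ => mul_le_mul_of_nonneg_left (hV s') (hP0 h s a s')
      _ = ((H - h : ℕ) : ℝ) := by rw [← Finset.sum_mul, hP1, one_mul]
  have hr := (hrhat h s a).2
  push_cast
  linarith

lemma lemC [Fintype S] [Fintype A] [Nonempty A]
    (H : ℕ) (P : ℕ → S → A → S → ℝ)
    (hP0 : ∀ h s a s', 0 ≤ P h s a s') (hP1 : ∀ h s a, ∑ s', P h s a s' = 1)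
    (rhat : ℕ → S → A → ℝ) (hrhat : ∀ h s a, rhat h s a ∈ Set.Icc (0 : ℝ) 1)
    (Γ : ℕ → S → A → ℝ) (g : ℕ → S → A → ℝ)
    (hg : ∀ h ∈ Finset.Icc 1 H, ∀ (s : S) (a : A),
      |g h s a - ∑ s', P h s a s' * Vhat rhat g Γ H (h + 1) s'| ≤ Γ h s a) :
    ∀ n h, 1 ≤ h → n = H + 1 - h → ∀ (π : ℕ → S → A) (s : S),
      Vpol P π rhat n h s ≤ Vhat rhat g Γ H h s := by
  intro n
  induction n with
  | zero =>
    intro h h1 hn π s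
    have hh : ¬ h ≤ H := by omega
    simp [Vpol, Vhat, hh]
  | succ n ih =>
    intro h h1 hn π s
    have hH : h ≤ H := by omega
    have step : ∀ s', Vpol P π rhat n (h + 1) s' ≤ Vhat rhat g Γ H (h + 1) s' :=
      ih (h + 1) (by omega) (by omega) π
    calc Vpol P π rhat (n + 1) h s
        = rhat h s (π h s) + ∑ s', P h s (π h s) s' * Vpol P π rhat n (h + 1) s' := by
          rw [Vpol]
      _ ≤ rhat h s (π h s) + ∑ s', P h s (π h s) s' * Vhat rhat g Γ H (h + 1) s' := by
          refine add_le_add_right (Finset.sum_le_sum fun s' _ =>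
            mul_le_mul_of_nonneg_left (step s') (hP0 h s (π h s) s')) _
      _ ≤ Qhat rhat g Γ H h s (π h s) :=
          lemA H P hP0 hP1 rhat hrhat Γ g hg h h1 hH s (π h s)
      _ ≤ Vhat rhat g Γ H h s := by
          rw [Vhat, if_pos hH]
          exact le_ciSup (Set.Finite.bddAbove (Set.finite_range _)) (π h s)

/-- if `|g_h(s,a) − (P_h V̂_{h+1})(s,a)| ≤ Γ_h(s,a)` everywhere, then the
optimistic values dominate the optimal ones: `Q̂_h(s,a) ≥ Q_h^*(s,a,r̂)` and
`V̂_h(s) ≥ V_h^*(s,r̂)` for all `h ∈ [H]`, `s`, `a`. -/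
theorem stmt13 [Fintype S] [Fintype A] [Nonempty A]
    (H : ℕ) (P : ℕ → S → A → S → ℝ)
    (hP0 : ∀ h s a s', 0 ≤ P h s a s') (hP1 : ∀ h s a, ∑ s', P h s a s' = 1)
    (rhat : ℕ → S → A → ℝ) (hrhat : ∀ h s a, rhat h s a ∈ Set.Icc (0 : ℝ) 1)
    (Γ : ℕ → S → A → ℝ) (hΓ : ∀ h s a, 0 ≤ Γ h s a)
    (g : ℕ → S → A → ℝ)
    (hg : ∀ h ∈ Finset.Icc 1 H, ∀ (s : S) (a : A),
      |g h s a - ∑ s', P h s a s' * Vhat rhat g Γ H (h + 1) s'| ≤ Γ h s a) :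
    ∀ h ∈ Finset.Icc 1 H, ∀ (s : S) (a : A),
      Qstar P rhat H h s a ≤ Qhat rhat g Γ H h s a
      ∧ Vstar P rhat H h s ≤ Vhat rhat g Γ H h s := by
  intro h hmem s a
  obtain ⟨h1, hH⟩ := Finset.mem_Icc.mp hmem
  constructor
  · refine ciSup_le fun π => ?_
    unfold Qpol
    have step : ∀ s', Vpol P π rhat (H - h) (h + 1) s' ≤ Vhat rhat g Γ H (h + 1) s' :=
      fun s' => lemC H P hP0 hP1 rhat hrhat Γ g hg (H - h) (h + 1) (by omega) (by omega) π s'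
    calc rhat h s a + ∑ s', P h s a s' * Vpol P π rhat (H - h) (h + 1) s'
        ≤ rhat h s a + ∑ s', P h s a s' * Vhat rhat g Γ H (h + 1) s' :=
          add_le_add_right (Finset.sum_le_sum fun s' _ =>
            mul_le_mul_of_nonneg_left (step s') (hP0 h s a s')) _
      _ ≤ Qhat rhat g Γ H h s a := lemA H P hP0 hP1 rhat hrhat Γ g hg h h1 hH s a
  · refine ciSup_le fun π => ?_
    exact lemC H P hP0 hP1 rhat hrhat Γ g hg (H + 1 - h) h h1 rfl π s
end

section
/- Let d, k ∈ ℕ, let φ₁,…,φ_k ∈ ℝ^d satisfy ‖φ_τ‖₂ ≤ 1 for all τ, let y₁,…,y_k ∈ ℝ satisfy |y_τ| ≤ H for all τ, and let w = Λ^{−1}·Σ_{τ=1}^k φ_τ y_τ where Λ = I_d + Σ_{τ=1}^k φ_τ φ_τᵀ (i.e., w is the ridge-regression solution w = argmin_{v∈ℝ^d} Σ_{τ=1}^k (vᵀφ_τ − y_τ)² + ‖v‖₂²). Then ‖w‖₂ ≤ 2H√(dk). -/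
open Matrix

/-- the ridge-regression solution `w = Λ⁻¹·Σ_τ φ_τ y_τ` with
`Λ = I_d + Σ_τ φ_τ φ_τᵀ`, `‖φ_τ‖₂ ≤ 1`, and `|y_τ| ≤ H` satisfies `‖w‖₂ ≤ 2H√(dk)`. -/
theorem stmt16 (d k : ℕ) (H : ℝ) (φ : Fin k → Fin d → ℝ) (y : Fin k → ℝ)
    (hφ : ∀ τ, Real.sqrt (∑ j, (φ τ j) ^ 2) ≤ 1) (hy : ∀ τ, |y τ| ≤ H)
    (Λ : Matrix (Fin d) (Fin d) ℝ)
    (hΛ : Λ = 1 + ∑ τ, vecMulVec (φ τ) (φ τ))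
    (w : Fin d → ℝ) (hw : w = Λ⁻¹.mulVec (∑ τ, y τ • φ τ)) :
    Real.sqrt (∑ j, (w j) ^ 2) ≤ 2 * H * Real.sqrt ((d : ℝ) * k) := by
  -- Λ *ᵥ x = x + ∑ (φτ ⬝ᵥ x) • φτ
  have hmul : ∀ x : Fin d → ℝ, Λ *ᵥ x = x + ∑ τ, (φ τ ⬝ᵥ x) • φ τ := by
    intro x
    ext i
    rw [hΛ, Matrix.add_mulVec, Matrix.one_mulVec]
    simp only [Pi.add_apply, Matrix.mulVec, dotProduct, Matrix.sum_apply,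
      Matrix.vecMulVec_apply, Finset.sum_apply, Pi.smul_apply, smul_eq_mul, Finset.sum_mul]
    congr 1
    rw [Finset.sum_comm]
    refine Finset.sum_congr rfl fun τ _ => ?_
    exact Finset.sum_congr rfl fun j _ => by ring
  -- quadratic form
  have hquad : ∀ x : Fin d → ℝ, x ⬝ᵥ (Λ *ᵥ x) = (∑ j, x j ^ 2) + ∑ τ, (φ τ ⬝ᵥ x) ^ 2 := by
    intro x
    rw [hmul, dotProduct_add]
    congr 1
    · simp [dotProduct, sq]
    · simp only [dotProduct, Finset.sum_apply, Pi.smul_apply, smul_eq_mul,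
        Finset.mul_sum]
      rw [Finset.sum_comm]
      refine Finset.sum_congr rfl fun τ _ => ?_
      have hpull : ∀ S : ℝ, ∑ j, x j * (S * φ τ j) = S * ∑ j, φ τ j * x j := fun S => by
        rw [Finset.mul_sum]; exact Finset.sum_congr rfl fun j _ => by ring
      rw [hpull, sq]
  -- Λ is positive definite
  have hPD : Λ.PosDef := by
    rw [Matrix.posDef_iff_dotProduct_mulVec]
    constructor
    · rw [hΛ]
      refine Matrix.IsHermitian.add Matrix.isHermitian_one ?_
      show _ = _
      rw [Matrix.conjTranspose_sum]
      refine Finset.sum_congr rfl fun τ _ => ?_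
      ext i j
      simp [Matrix.vecMulVec_apply, Matrix.conjTranspose_apply, mul_comm]
    · intro x hx
      have : (star x : Fin d → ℝ) = x := by simp
      rw [this, hquad]
      have h1 : 0 < ∑ j, x j ^ 2 := by
        rcases Function.ne_iff.mp hx with ⟨j, hj⟩
        exact Finset.sum_pos' (fun i _ => sq_nonneg _)
          ⟨j, Finset.mem_univ j, by rw [← sq_abs]; exact pow_pos (abs_pos.mpr hj) 2⟩
      have h2 : 0 ≤ ∑ τ, (φ τ ⬝ᵥ x) ^ 2 := Finset.sum_nonneg fun τ _ => sq_nonneg _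
      linarith
  -- Λ *ᵥ w = ∑ yτ • φτ
  have hΛw : Λ *ᵥ w = ∑ τ, y τ • φ τ := by
    rw [hw, Matrix.mulVec_mulVec, Matrix.mul_nonsing_inv _ (Matrix.isUnit_iff_isUnit_det _ |>.mp hPD.isUnit), Matrix.one_mulVec]
  set T : ℝ := ∑ τ, (φ τ ⬝ᵥ w) ^ 2 with hT
  have hT0 : 0 ≤ T := Finset.sum_nonneg fun τ _ => sq_nonneg _
  have hw2 : 0 ≤ ∑ j, w j ^ 2 := Finset.sum_nonneg fun j _ => sq_nonneg _
  -- main case split on k, d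
  rcases Nat.eq_zero_or_pos k with hk | hk
  · subst hk
    have : w = 0 := by
      rw [hw]; simp
    rw [this]
    simp
  have hH : 0 ≤ H := le_trans (abs_nonneg _) (hy ⟨0, hk⟩)
  -- key identity : ∑ wj² + T = ∑ yτ (φτ ⬝ᵥ w)
  have hkey : (∑ j, w j ^ 2) + T = ∑ τ, y τ * (φ τ ⬝ᵥ w) := by
    have h := hquad w
    rw [hΛw] at h
    rw [← h]
    simp only [dotProduct, Finset.sum_apply, Pi.smul_apply, smul_eq_mul,
      Finset.mul_sum]
    rw [Finset.sum_comm]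
    refine Finset.sum_congr rfl fun τ _ => ?_
    exact Finset.sum_congr rfl fun j _ => by ring
  -- bound RHS by H * √k * √T
  have hCS : (∑ τ, |φ τ ⬝ᵥ w|) ^ 2 ≤ (k : ℝ) * T := by
    have := Finset.sum_mul_sq_le_sq_mul_sq Finset.univ (fun _ : Fin k => (1 : ℝ))
      (fun τ => |φ τ ⬝ᵥ w|)
    simpa [sq_abs] using this
  have hbound : (∑ j, w j ^ 2) + T ≤ H * Real.sqrt ((k : ℝ) * T) := by
    calc (∑ j, w j ^ 2) + T = ∑ τ, y τ * (φ τ ⬝ᵥ w) := hkey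
      _ ≤ ∑ τ, H * |φ τ ⬝ᵥ w| := by
          refine Finset.sum_le_sum fun τ _ => ?_
          calc y τ * (φ τ ⬝ᵥ w) ≤ |y τ * (φ τ ⬝ᵥ w)| := le_abs_self _
            _ = |y τ| * |φ τ ⬝ᵥ w| := abs_mul _ _
            _ ≤ H * |φ τ ⬝ᵥ w| := by
                exact mul_le_mul_of_nonneg_right (hy τ) (abs_nonneg _)
      _ = H * ∑ τ, |φ τ ⬝ᵥ w| := by rw [Finset.mul_sum]
      _ ≤ H * Real.sqrt ((k : ℝ) * T) := by
          refine mul_le_mul_of_nonneg_left ?_ hH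
          have h := Real.sqrt_le_sqrt hCS
          rwa [Real.sqrt_sq (Finset.sum_nonneg fun τ _ => abs_nonneg _)] at h
  -- deduce ∑ wj² ≤ H² * k
  have hsq : (∑ j, w j ^ 2) ≤ H ^ 2 * k := by
    have hs : Real.sqrt ((k : ℝ) * T) ^ 2 = (k : ℝ) * T :=
      Real.sq_sqrt (by positivity)
    have hkpos : (0:ℝ) < k := by exact_mod_cast hk
    nlinarith [hs, sq_nonneg (2 * Real.sqrt ((k : ℝ) * T) - H * k), Real.sqrt_nonneg ((k : ℝ) * T),
      mul_nonneg hkpos.le hw2, mul_le_mul_of_nonneg_left hbound (by positivity : (0:ℝ) ≤ 4 * k)]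
  -- finish
  rcases Nat.eq_zero_or_pos d with hd | hd
  · subst hd
    have : (∑ j : Fin 0, w j ^ 2) = 0 := by simp
    rw [this, Real.sqrt_zero]
    positivity
  have h1 : Real.sqrt (∑ j, w j ^ 2) ≤ Real.sqrt (H ^ 2 * k) := Real.sqrt_le_sqrt hsq
  have h2 : Real.sqrt (H ^ 2 * k) = H * Real.sqrt k := by
    rw [Real.sqrt_mul (sq_nonneg _), Real.sqrt_sq hH]
  have h3 : Real.sqrt ((d : ℝ) * k) = Real.sqrt d * Real.sqrt k :=
    Real.sqrt_mul (by positivity) _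
  have hd1 : (1 : ℝ) ≤ Real.sqrt d := by
    rw [show (1:ℝ) = Real.sqrt 1 by simp]
    exact Real.sqrt_le_sqrt (by exact_mod_cast hd)
  have : H * Real.sqrt k ≤ 2 * H * (Real.sqrt d * Real.sqrt k) := by
    nlinarith [mul_nonneg hH (Real.sqrt_nonneg (k : ℝ)), Real.sqrt_nonneg (d : ℝ),
      mul_nonneg (mul_nonneg hH (Real.sqrt_nonneg (k : ℝ))) (Real.sqrt_nonneg (d : ℝ))]
  calc Real.sqrt (∑ j, w j ^ 2) ≤ H * Real.sqrt k := by rw [← h2]; exact h1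
    _ ≤ 2 * H * Real.sqrt ((d : ℝ) * k) := by rw [h3]; exact this
end
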